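/- arXiv:1101.4241 — 7 statements merged into one kernel-verified Lean document; each statement's English description precedes it below -/
import Mathlib

section
/- Let Λ be an artin algebra and let 0 → N →j→ E →π→ M → 0 be an almost split sequence in mod Λ. Then the sequence 0 → (N → 0) → (π : E → M) → (1_M : M → M) → 0 in maps(mod Λ), whose first morphism has components j : N → E and 0 : 0 → M, and whose second morphism has components π : E → M and 1_M : M → M, is an almost split sequence in maps(mod Λ). -/
open CategoryTheory CategoryTheory.Limits

universe u

/-- An object of a category is indecomposable if it is nonzero and in any direct sum
decomposition (encoded as a compatible product-and-coproduct diagram) one of the two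
summands is zero. -/
def IsIndecomposable {C : Type*} [Category C] (X : C) : Prop :=
  ¬ IsZero X ∧
    ∀ ⦃Y Z : C⦄ (p : X ⟶ Y) (q : X ⟶ Z) (i : Y ⟶ X) (j : Z ⟶ X),
      i ≫ p = 𝟙 Y → j ≫ q = 𝟙 Z →
      Nonempty (IsLimit (BinaryFan.mk p q)) →
      Nonempty (IsColimit (BinaryCofan.mk i j)) →
      IsZero Y ∨ IsZero Z

/-- The categorical conditions for a short exact sequence `0 → N → E → M → 0` to be
almost split: it does not split (`β` is not a split epimorphism), both ends are
indecomposable, and every morphism to `M` which is not a split epimorphism factors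
through `β`. -/
def IsAlmostSplitSeq {C : Type*} [Category C] {N E M : C} (_α : N ⟶ E) (β : E ⟶ M) : Prop :=
  ¬ IsSplitEpi β ∧ IsIndecomposable N ∧ IsIndecomposable M ∧
    ∀ ⦃X : C⦄ (u : X ⟶ M), ¬ IsSplitEpi u → ∃ v : X ⟶ E, v ≫ β = u

/-- Short exactness of `0 → N → E → M → 0` in `mod Λ`, stated concretely. -/
def IsShortExactSeq {Λ : Type u} [Ring Λ] {N E M : FGModuleCat Λ}
    (α : N ⟶ E) (β : E ⟶ M) : Prop :=
  Function.Injective ⇑α ∧ Function.Exact ⇑α ⇑β ∧ Function.Surjective ⇑β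

/-- Componentwise short exactness of a sequence in `maps (mod Λ)`. -/
def IsShortExactSeqMaps {Λ : Type u} [Ring Λ] {X Y Z : Arrow (FGModuleCat Λ)}
    (α : X ⟶ Y) (β : Y ⟶ Z) : Prop :=
  IsShortExactSeq α.left β.left ∧ IsShortExactSeq α.right β.right

/-- An almost split sequence in `maps (mod Λ)`: a componentwise short exact sequence
which is almost split. -/
def IsAlmostSplitSeqMaps {Λ : Type u} [Ring Λ] {X Y Z : Arrow (FGModuleCat Λ)}
    (α : X ⟶ Y) (β : Y ⟶ Z) : Prop :=
  IsShortExactSeqMaps α β ∧ IsAlmostSplitSeq α β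

section AuxAS

variable {C : Type*} [Category C]

/-- A retract of a zero object is zero. -/
lemma AS.isZero_of_retract {X Y : C} (hX : IsZero X) (i : Y ⟶ X) (p : X ⟶ Y)
    (h : i ≫ p = 𝟙 Y) : IsZero Y := by
  constructor
  · intro A
    refine ⟨⟨⟨i ≫ hX.to_ A⟩, fun a => ?_⟩⟩
    calc a = (i ≫ p) ≫ a := by rw [h, Category.id_comp]
      _ = i ≫ (p ≫ a) := by simp
      _ = i ≫ hX.to_ A := by rw [hX.eq_of_src (p ≫ a) (hX.to_ A)]
  · intro A
    refine ⟨⟨⟨hX.from_ A ≫ p⟩, fun a => ?_⟩⟩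
    calc a = a ≫ (i ≫ p) := by rw [h, Category.comp_id]
      _ = (a ≫ i) ≫ p := by simp
      _ = hX.from_ A ≫ p := by rw [hX.eq_of_tgt (a ≫ i) (hX.from_ A)]

/-- An arrow object whose two components are zero is zero. -/
lemma AS.arrow_isZero_of_components {W : Arrow C} (hl : IsZero W.left) (hr : IsZero W.right) :
    IsZero W := by
  constructor
  · intro A
    exact ⟨⟨⟨Arrow.homMk (u := hl.to_ A.left) (v := hr.to_ A.right) (hl.eq_of_src _ _)⟩,
      fun a => Arrow.hom_ext _ _ (hl.eq_of_src _ _) (hr.eq_of_src _ _)⟩⟩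
  · intro A
    exact ⟨⟨⟨Arrow.homMk (u := hl.from_ A.left) (v := hr.from_ A.right) (hr.eq_of_tgt _ _)⟩,
      fun a => Arrow.hom_ext _ _ (hl.eq_of_tgt _ _) (hr.eq_of_tgt _ _)⟩⟩

/-- If an arrow object is zero then its left component is zero (assuming the ambient
category has some zero object `Zc`). -/
lemma AS.isZero_left_of_arrow {Zc : C} (hZc : IsZero Zc) {W : Arrow C} (hW : IsZero W) :
    IsZero W.left := by
  constructor
  · intro A
    refine ⟨⟨⟨(hW.to_ (Arrow.mk (hZc.from_ A))).left⟩, fun f => ?_⟩⟩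
    have h : (Arrow.homMk (u := f) (v := hZc.from_ W.right) (hZc.eq_of_tgt _ _) :
        W ⟶ Arrow.mk (hZc.from_ A)) = hW.to_ _ := hW.eq_of_src _ _
    have e := congrArg CommaMorphism.left h
    simpa using e
  · intro A
    refine ⟨⟨⟨(hW.from_ (Arrow.mk (𝟙 A))).left⟩, fun f => ?_⟩⟩
    have h : (Arrow.homMk (u := f) (v := f ≫ W.hom) (by simp) :
        Arrow.mk (𝟙 A) ⟶ W) = hW.from_ _ := hW.eq_of_tgt _ _
    have e := congrArg CommaMorphism.left h
    simpa using e

/-- Left components of a binary product diagram in the arrow category form a binary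
product diagram. -/
noncomputable def AS.isLimit_left {X Y Z : Arrow C} {p : X ⟶ Y} {q : X ⟶ Z}
    (h : IsLimit (BinaryFan.mk p q)) : IsLimit (BinaryFan.mk p.left q.left) := by
  have exu : ∀ (W : C) (f : W ⟶ Y.left) (g : W ⟶ Z.left),
      ∃! m : W ⟶ X.left, m ≫ p.left = f ∧ m ≫ q.left = g := by
    intro W f g
    obtain ⟨l, hl1, hl2⟩ := BinaryFan.IsLimit.lift' h
      (Arrow.homMk (u := f) (v := f ≫ Y.hom) (by simp) : Arrow.mk (𝟙 W) ⟶ Y)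
      (Arrow.homMk (u := g) (v := g ≫ Z.hom) (by simp))
    refine ⟨l.left, ⟨?_, ?_⟩, ?_⟩
    · have := congrArg CommaMorphism.left hl1; simpa using this
    · have := congrArg CommaMorphism.left hl2; simpa using this
    · rintro m ⟨hm1, hm2⟩
      have hM : (Arrow.homMk (u := m) (v := m ≫ X.hom) (by simp) :
          Arrow.mk (𝟙 W) ⟶ X) = l := by
        apply BinaryFan.IsLimit.hom_ext h
        · rw [hl1]
          apply Arrow.hom_ext
          · simpa using hm1
          · show (m ≫ X.hom) ≫ p.right = f ≫ Y.hom
            rw [Category.assoc, ← Arrow.w p, ← Category.assoc, hm1]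
        · rw [hl2]
          apply Arrow.hom_ext
          · simpa using hm2
          · show (m ≫ X.hom) ≫ q.right = g ≫ Z.hom
            rw [Category.assoc, ← Arrow.w q, ← Category.assoc, hm2]
      have := congrArg CommaMorphism.left hM; simpa using this
  exact BinaryFan.isLimitMk (fun s => (exu s.pt s.fst s.snd).choose)
    (fun s => (exu s.pt s.fst s.snd).choose_spec.1.1)
    (fun s => (exu s.pt s.fst s.snd).choose_spec.1.2)
    (fun s m h1 h2 => (exu s.pt s.fst s.snd).choose_spec.2 m ⟨h1, h2⟩)

/-- Left components of a binary coproduct diagram in the arrow category form a binary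
coproduct diagram (assuming the ambient category has some zero object `Zc`). -/
noncomputable def AS.isColimit_left {Zc : C} (hZc : IsZero Zc) {X Y Z : Arrow C} {i : Y ⟶ X} {j : Z ⟶ X}
    (h : IsColimit (BinaryCofan.mk i j)) : IsColimit (BinaryCofan.mk i.left j.left) := by
  have exu : ∀ (W : C) (f : Y.left ⟶ W) (g : Z.left ⟶ W),
      ∃! m : X.left ⟶ W, i.left ≫ m = f ∧ j.left ≫ m = g := by
    intro W f g
    obtain ⟨l, hl1, hl2⟩ := BinaryCofan.IsColimit.desc' h
      (Arrow.homMk (u := f) (v := hZc.from_ Y.right) (hZc.eq_of_tgt _ _) :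
        Y ⟶ Arrow.mk (hZc.from_ W))
      (Arrow.homMk (u := g) (v := hZc.from_ Z.right) (hZc.eq_of_tgt _ _))
    refine ⟨l.left, ⟨?_, ?_⟩, ?_⟩
    · have := congrArg CommaMorphism.left hl1; simp at this; exact this
    · have := congrArg CommaMorphism.left hl2; simp at this; exact this
    · rintro m ⟨hm1, hm2⟩
      have hM : (Arrow.homMk (u := m) (v := hZc.from_ X.right) (hZc.eq_of_tgt _ _) :
          X ⟶ Arrow.mk (hZc.from_ W)) = l := by
        apply BinaryCofan.IsColimit.hom_ext h
        · rw [hl1]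
          apply Arrow.hom_ext
          · exact hm1
          · exact hZc.eq_of_tgt _ _
        · rw [hl2]
          apply Arrow.hom_ext
          · exact hm2
          · exact hZc.eq_of_tgt _ _
      have := congrArg CommaMorphism.left hM; simpa using this
  exact BinaryCofan.isColimitMk (fun s => (exu s.pt s.inl s.inr).choose)
    (fun s => (exu s.pt s.inl s.inr).choose_spec.1.1)
    (fun s => (exu s.pt s.inl s.inr).choose_spec.1.2)
    (fun s m h1 h2 => (exu s.pt s.inl s.inr).choose_spec.2 m ⟨h1, h2⟩)

end AuxAS

/-- Let `Λ` be an artin algebra and `0 → N →j→ E →π→ M → 0` an almost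
split sequence in `mod Λ`.  Then `0 → (N → 0) → (π : E → M) → (1_M : M → M) → 0`, whose
first morphism has components `j` and `0` and whose second morphism has components `π`
and `1_M`, is an almost split sequence in `maps (mod Λ)`. -/
theorem almostSplit_maps_of_almostSplit_right
    {R : Type u} [CommRing R] [IsArtinianRing R]
    {Λ : Type u} [Ring Λ] [Algebra R Λ] [Module.Finite R Λ]
    {N E M : FGModuleCat Λ} (j : N ⟶ E) (π : E ⟶ M)
    (hw : j ≫ π = 0) (hex : IsShortExactSeq j π) (has : IsAlmostSplitSeq j π)
    (Z : FGModuleCat Λ) (hZ : IsZero Z) :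
    IsAlmostSplitSeqMaps
      (X := Arrow.mk (0 : N ⟶ Z)) (Y := Arrow.mk π) (Z := Arrow.mk (𝟙 M))
      (Arrow.homMk (u := j) (v := (0 : Z ⟶ M)) (by simp [hw]))
      (Arrow.homMk (u := π) (v := 𝟙 M) (by simp)) := by
  have hZsub : ∀ x : Z, x = 0 := by
    intro x
    have h0 : (𝟙 Z : Z ⟶ Z) = 0 := hZ.eq_of_src _ _
    calc x = (𝟙 Z : Z ⟶ Z) x := rfl
      _ = (0 : Z ⟶ Z) x := by rw [h0]
      _ = 0 := rfl
  constructor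
  · -- componentwise short exactness
    constructor
    · exact hex
    · refine ⟨?_, ?_, ?_⟩
      · intro a b _
        rw [show a = 0 from hZsub a, show b = 0 from hZsub b]
      · intro y
        constructor
        · intro hy
          exact ⟨0, hy.symm⟩
        · rintro ⟨x, hx⟩
          exact hx.symm
      · exact fun y => ⟨y, rfl⟩
  · refine ⟨?_, ⟨?_, ?_⟩, ⟨?_, ?_⟩, ?_⟩
    · -- β is not split epi
      intro hsplit
      obtain ⟨⟨s, hs⟩⟩ := hsplit.exists_splitEpi
      apply has.1
      refine ⟨⟨⟨s.left, ?_⟩⟩⟩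
      have := congrArg CommaMorphism.left hs
      simpa using this
    · -- Arrow.mk (0 : N ⟶ Z) is nonzero
      intro h0
      exact has.2.1.1 (AS.isZero_left_of_arrow hZ h0)
    · -- decompositions of Arrow.mk (0 : N ⟶ Z)
      rintro Y' Z' p q i' j' hip hjq ⟨hlim⟩ ⟨hcolim⟩
      have hYr : IsZero Y'.right := by
        refine AS.isZero_of_retract hZ i'.right p.right ?_
        have := congrArg CommaMorphism.right hip; simpa using this
      have hZr : IsZero Z'.right := by
        refine AS.isZero_of_retract hZ j'.right q.right ?_
        have := congrArg CommaMorphism.right hjq; simpa using this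
      have hipl : i'.left ≫ p.left = 𝟙 Y'.left := by
        have := congrArg CommaMorphism.left hip; simpa using this
      have hjql : j'.left ≫ q.left = 𝟙 Z'.left := by
        have := congrArg CommaMorphism.left hjq; simpa using this
      have hleft := has.2.1.2 p.left q.left i'.left j'.left hipl hjql
        ⟨AS.isLimit_left hlim⟩ ⟨AS.isColimit_left hZ hcolim⟩
      rcases hleft with hl | hl
      · exact Or.inl (AS.arrow_isZero_of_components hl hYr)
      · exact Or.inr (AS.arrow_isZero_of_components hl hZr)
    · -- Arrow.mk (𝟙 M) is nonzero
      intro h0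
      exact has.2.2.1.1 (AS.isZero_left_of_arrow hZ h0)
    · -- decompositions of Arrow.mk (𝟙 M)
      rintro Y' Z' p q i' j' hip hjq ⟨hlim⟩ ⟨hcolim⟩
      have hipl : i'.left ≫ p.left = 𝟙 Y'.left := by
        have := congrArg CommaMorphism.left hip; simpa using this
      have hipr : i'.right ≫ p.right = 𝟙 Y'.right := by
        have := congrArg CommaMorphism.right hip; simpa using this
      have hjql : j'.left ≫ q.left = 𝟙 Z'.left := by
        have := congrArg CommaMorphism.left hjq; simpa using this
      have hjqr : j'.right ≫ q.right = 𝟙 Z'.right := by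
        have := congrArg CommaMorphism.right hjq; simpa using this
      have wi : Y'.hom ≫ i'.right = i'.left := by
        have := Arrow.w i'; simp at this; exact this.symm
      have wp : p.left ≫ Y'.hom = p.right := by
        simp
      have wj : Z'.hom ≫ j'.right = j'.left := by
        have := Arrow.w j'; simp at this; exact this.symm
      have wq : q.left ≫ Z'.hom = q.right := by
        simp
      have eY : Y'.left ≅ Y'.right :=
        { hom := Y'.hom
          inv := i'.right ≫ p.left
          hom_inv_id := by rw [← Category.assoc, wi, hipl]
          inv_hom_id := by rw [Category.assoc, wp, hipr] }
      have eZ : Z'.left ≅ Z'.right :=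
        { hom := Z'.hom
          inv := j'.right ≫ q.left
          hom_inv_id := by rw [← Category.assoc, wj, hjql]
          inv_hom_id := by rw [Category.assoc, wq, hjqr] }
      have hleft := has.2.2.1.2 p.left q.left i'.left j'.left hipl hjql
        ⟨AS.isLimit_left hlim⟩ ⟨AS.isColimit_left hZ hcolim⟩
      rcases hleft with hl | hl
      · exact Or.inl (AS.arrow_isZero_of_components hl (hl.of_iso eY.symm))
      · exact Or.inr (AS.arrow_isZero_of_components hl (hl.of_iso eZ.symm))
    · -- factorization property
      rintro W uu hu
      have wu : W.hom ≫ uu.right = uu.left := by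
        have := Arrow.w uu; simp at this; exact this.symm
      have hul : ¬ IsSplitEpi uu.left := by
        intro hsp
        obtain ⟨⟨s, hs⟩⟩ := hsp.exists_splitEpi
        apply hu
        refine ⟨⟨⟨Arrow.homMk (u := s) (v := s ≫ W.hom) (by simp), ?_⟩⟩⟩
        apply Arrow.hom_ext
        · simpa using hs
        · show (s ≫ W.hom) ≫ uu.right = _
          rw [Category.assoc, wu, hs]
          rfl
      obtain ⟨v, hv⟩ := has.2.2.2 uu.left hul
      refine ⟨Arrow.homMk (u := v) (v := uu.right) ?_, ?_⟩
      · show v ≫ π = W.hom ≫ uu.right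
        rw [hv, wu]
      · apply Arrow.hom_ext
        · simpa using hv
        · simp
end

section
/- Let Λ be an artin algebra and let 𝒞 be a full subcategory of maps(mod Λ) closed under isomorphisms. If 𝒞 is contravariantly finite in maps(mod Λ), then the full subcategory Φ(𝒞) of mod(mod Λ) consisting of the functors isomorphic to Φ(Z) for some Z in 𝒞 is contravariantly finite in mod(mod Λ). -/
open CategoryTheory CategoryTheory.Limits

universe u

/-- The functor `Φ : maps (mod Λ) → mod (mod Λ)` on objects: it sends `f : M₁ → M₂` to
`Coker((−,f) : (−,M₁) → (−,M₂))`. -/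
noncomputable def PhiObj {Λ : Type u} [Ring Λ] (a : Arrow (FGModuleCat Λ)) :
    (FGModuleCat Λ)ᵒᵖ ⥤ AddCommGrpCat.{u} :=
  cokernel (preadditiveYoneda.map a.hom)

/-- A functor `F : (mod Λ)ᵒᵖ → Ab` is finitely presented if there is an exact sequence
`(−,M₁) → (−,M₀) → F → 0`. -/
def IsFinitelyPresentedFunctor {Λ : Type u} [Ring Λ]
    (F : (FGModuleCat Λ)ᵒᵖ ⥤ AddCommGrpCat.{u}) : Prop :=
  ∃ (M₁ M₀ : FGModuleCat Λ) (f : M₁ ⟶ M₀) (p : preadditiveYoneda.obj M₀ ⟶ F)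
    (w : preadditiveYoneda.map f ≫ p = 0),
    Epi p ∧ (ShortComplex.mk (preadditiveYoneda.map f) p w).Exact

/-- The full subcategory `Φ(𝒞)`: objects isomorphic to `Φ(Z)` for some `Z ∈ 𝒞`. -/
noncomputable def PhiImage {Λ : Type u} [Ring Λ] (𝒞 : Set (Arrow (FGModuleCat Λ))) :
    Set ((FGModuleCat Λ)ᵒᵖ ⥤ AddCommGrpCat.{u}) :=
  {F | ∃ Z ∈ 𝒞, Nonempty (PhiObj Z ≅ F)}

/-- `f : Z → M` is a right `𝒳`-approximation of `M`. -/
def IsRightApproximation {C : Type*} [Category C] (𝒳 : Set C) {Z M : C} (f : Z ⟶ M) : Prop :=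
  Z ∈ 𝒳 ∧ ∀ ⦃Z' : C⦄, Z' ∈ 𝒳 → ∀ u : Z' ⟶ M, ∃ v : Z' ⟶ Z, v ≫ f = u

/-- `M` has a right `𝒳`-approximation. -/
def HasRightApproximation {C : Type*} [Category C] (𝒳 : Set C) (M : C) : Prop :=
  ∃ (Z : C) (f : Z ⟶ M), IsRightApproximation 𝒳 f

/-- Two natural transformations out of a preadditive-Yoneda representable that agree on the
identity agree. -/
lemma preadditiveYoneda_hom_ext' {C : Type*} [Category C] [Preadditive C] {A : C}
    {F : Cᵒᵖ ⥤ AddCommGrpCat} (η ν : preadditiveYoneda.obj A ⟶ F)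
    (h : η.app (Opposite.op A) (𝟙 A) = ν.app (Opposite.op A) (𝟙 A)) : η = ν := by
  ext W x
  have hη := NatTrans.naturality_apply η x.op (𝟙 A)
  have hν := NatTrans.naturality_apply ν x.op (𝟙 A)
  have hx : ((preadditiveYoneda.obj A).map x.op) (𝟙 A) = x := Category.comp_id x
  rw [hx] at hη hν
  show η.app (Opposite.op W.unop) x = ν.app (Opposite.op W.unop) x
  rw [hη, hν, h]

/-- Let `Λ` be an artin algebra and `𝒞` a full subcategory of
`maps (mod Λ)` closed under isomorphisms.  If `𝒞` is contravariantly finite in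
`maps (mod Λ)`, then `Φ(𝒞)` is contravariantly finite in `mod (mod Λ)`. -/
theorem phiImage_contravariantlyFinite
    {R : Type u} [CommRing R] [IsArtinianRing R]
    {Λ : Type u} [Ring Λ] [Algebra R Λ] [Module.Finite R Λ]
    (𝒞 : Set (Arrow (FGModuleCat Λ)))
    (hiso : ∀ ⦃X Y : Arrow (FGModuleCat Λ)⦄, (X ≅ Y) → X ∈ 𝒞 → Y ∈ 𝒞)
    (hcf : ∀ M : Arrow (FGModuleCat Λ), HasRightApproximation 𝒞 M) :
    ∀ F : (FGModuleCat Λ)ᵒᵖ ⥤ AddCommGrpCat.{u}, IsFinitelyPresentedFunctor F →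
      HasRightApproximation (PhiImage 𝒞) F := by
  rintro F ⟨M₁, M₀, f, p, w, hp, hex⟩
  obtain ⟨Z, g, hZC, happ⟩ := hcf (Arrow.mk f)
  have hgw : g.left ≫ f = Z.hom ≫ g.right := Arrow.w g
  have hw : preadditiveYoneda.map Z.hom ≫ preadditiveYoneda.map g.right ≫ p = 0 := by
    rw [← Category.assoc, ← preadditiveYoneda.map_comp, ← hgw,
      preadditiveYoneda.map_comp, Category.assoc, w, comp_zero]
  refine ⟨PhiObj Z, cokernel.desc _ (preadditiveYoneda.map g.right ≫ p) hw,
    ⟨Z, hZC, ⟨Iso.refl _⟩⟩, ?_⟩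
  rintro G ⟨Z', hZ', ⟨φ⟩⟩ u
  set u' : cokernel (preadditiveYoneda.map Z'.hom) ⟶ F := φ.hom ≫ u with hu'
  set π' := cokernel.π (preadditiveYoneda.map Z'.hom) with hπ'
  haveI hepi : Epi (p.app (Opposite.op Z'.right)) := inferInstance
  obtain ⟨(m : Z'.right ⟶ M₀), hm⟩ := (AddCommGrpCat.epi_iff_surjective _).1 hepi
      ((π' ≫ u').app (Opposite.op Z'.right) (𝟙 Z'.right))
  -- Claim A : (−, m) ≫ p = π' ≫ u'
  have clA : preadditiveYoneda.map m ≫ p = π' ≫ u' := by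
    apply preadditiveYoneda_hom_ext'
    exact (congrArg (p.app (Opposite.op Z'.right)) (Category.id_comp m)).trans hm
  -- Claim B : p kills Z'.hom ≫ m
  have h0 : preadditiveYoneda.map (Z'.hom ≫ m) ≫ p = 0 := by
    rw [preadditiveYoneda.map_comp, Category.assoc, clA, ← Category.assoc,
      cokernel.condition, zero_comp]
  have hzm : p.app (Opposite.op Z'.left) (Z'.hom ≫ m) = 0 := by
    have := congrArg (fun η => η.app (Opposite.op Z'.left) (𝟙 Z'.left)) h0
    exact this
  -- pointwise exactness at Z'.left
  have hev := hex.map ((evaluation (FGModuleCat Λ)ᵒᵖ AddCommGrpCat.{u}).obj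
    (Opposite.op Z'.left))
  rw [ShortComplex.ab_exact_iff] at hev
  obtain ⟨(q : Z'.left ⟶ M₁), hq⟩ := hev (Z'.hom ≫ m) hzm
  have hq' : q ≫ f = Z'.hom ≫ m := by exact hq
  obtain ⟨v, hv⟩ := happ hZ' (Arrow.homMk (u := q) (v := m) hq')
  have hvr : v.right ≫ g.right = m := by
    have := congrArg CommaMorphism.right hv
    exact this
  have hsq : preadditiveYoneda.map Z'.hom ≫ preadditiveYoneda.map v.right
      = preadditiveYoneda.map v.left ≫ preadditiveYoneda.map Z.hom := by
    rw [← preadditiveYoneda.map_comp, ← preadditiveYoneda.map_comp, Arrow.w v]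
  refine ⟨φ.inv ≫ cokernel.map (preadditiveYoneda.map Z'.hom) (preadditiveYoneda.map Z.hom)
    (preadditiveYoneda.map v.left) (preadditiveYoneda.map v.right) hsq, ?_⟩
  have key : cokernel.map (preadditiveYoneda.map Z'.hom) (preadditiveYoneda.map Z.hom)
      (preadditiveYoneda.map v.left) (preadditiveYoneda.map v.right) hsq ≫
      cokernel.desc _ (preadditiveYoneda.map g.right ≫ p) hw = u' := by
    rw [← cancel_epi π']
    rw [cokernel.π_desc_assoc, Category.assoc, cokernel.π_desc, ← Category.assoc,
      ← preadditiveYoneda.map_comp, hvr, clA]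
  exact (Category.assoc _ _ _).trans ((congrArg (φ.inv ≫ ·) key).trans
    (by rw [hu']; exact φ.inv_hom_id_assoc u))
end

section
/- Let Λ be an artin algebra and let 𝒞 be a full subcategory of maps(mod Λ) closed under isomorphisms. If 𝒞 is covariantly finite in maps(mod Λ), then the full subcategory Φ(𝒞) of mod(mod Λ) consisting of the functors isomorphic to Φ(Z) for some Z in 𝒞 is covariantly finite in mod(mod Λ). -/
open CategoryTheory CategoryTheory.Limits

universe u

/-- `f : M → Z` is a left `𝒳`-approximation of `M`. -/
def IsLeftApproximation {C : Type*} [Category C] (𝒳 : Set C) {M Z : C} (f : M ⟶ Z) : Prop :=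
  Z ∈ 𝒳 ∧ ∀ ⦃Z' : C⦄, Z' ∈ 𝒳 → ∀ u : M ⟶ Z', ∃ v : Z ⟶ Z', f ≫ v = u

/-- `M` has a left `𝒳`-approximation. -/
def HasLeftApproximation {C : Type*} [Category C] (𝒳 : Set C) (M : C) : Prop :=
  ∃ (Z : C) (f : M ⟶ Z), IsLeftApproximation 𝒳 f

open Opposite
noncomputable def PhiMap {Λ : Type u} [Ring Λ] {X Z : Arrow (FGModuleCat Λ)} (a : X ⟶ Z) :
    PhiObj X ⟶ PhiObj Z :=
  cokernel.map _ _ (preadditiveYoneda.map a.left) (preadditiveYoneda.map a.right)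
    (by rw [← preadditiveYoneda.map_comp, ← preadditiveYoneda.map_comp, Arrow.w])

lemma PhiMap_comp {Λ : Type u} [Ring Λ] {X Z W : Arrow (FGModuleCat Λ)} (a : X ⟶ Z) (c : Z ⟶ W) :
    PhiMap (a ≫ c) = PhiMap a ≫ PhiMap c := by
  unfold PhiMap PhiObj
  apply coequalizer.hom_ext
  simp

lemma natApp {C : Type*} [Category C] {F G : C ⥤ AddCommGrpCat.{u}} (η : F ⟶ G) {X X' : C}
    (f : X ⟶ X') (x : F.obj X) :
    η.app X' (F.map f x) = G.map f (η.app X x) := by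
  have h := η.naturality f
  have := ConcreteCategory.congr_hom h x
  simp only [comp_apply] at this
  exact this

lemma exists_hom_of_phiHom {Λ : Type u} [Ring Λ] (X Z : Arrow (FGModuleCat Λ))
    (φ : PhiObj X ⟶ PhiObj Z) : ∃ a : X ⟶ Z, PhiMap a = φ := by
  classical
  set πX := cokernel.π (preadditiveYoneda.map X.hom) with hπX
  set πZ := cokernel.π (preadditiveYoneda.map Z.hom) with hπZ
  -- surjectivity of πZ at op X.right
  have hepi : Epi (πZ.app (op X.right)) := inferInstance
  rw [AddCommGrpCat.epi_iff_surjective] at hepi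
  obtain ⟨h₂, hh₂⟩ := hepi ((πX ≫ φ).app (op X.right) (𝟙 X.right))
  change X.right ⟶ Z.right at h₂
  have ht : preadditiveYoneda.map (h₂ : X.right ⟶ Z.right) ≫ πZ = πX ≫ φ := by
    ext X' f'
    obtain ⟨X'c⟩ := X'
    change X'c ⟶ X.right at f'
    have e1 : ((preadditiveYoneda.map h₂ ≫ πZ).app (op X'c)) f'
        = (πZ.app (op X'c)) ((preadditiveYoneda.obj Z.right).map
            (Quiver.Hom.op f') h₂) := rfl
    rw [e1, natApp πZ (Quiver.Hom.op f') h₂, hh₂]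
    refine (natApp (πX ≫ φ) (Quiver.Hom.op f') (𝟙 X.right)).symm.trans ?_
    congr 1
  -- step 2: find h₁
  have hS : (ShortComplex.mk (preadditiveYoneda.map Z.hom) πZ (cokernel.condition _)).Exact :=
    ShortComplex.exact_of_g_is_cokernel _ (cokernelIsCokernel _)
  have hS' := hS.map ((evaluation (FGModuleCat Λ)ᵒᵖ AddCommGrpCat.{u}).obj (op X.left))
  rw [ShortComplex.ab_exact_iff] at hS'
  have hcomp : preadditiveYoneda.map X.hom ≫ preadditiveYoneda.map (h₂ : X.right ⟶ Z.right) ≫ πZ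
      = 0 := by
    rw [ht, hπX]; exact (cokernel.condition_assoc _ φ).trans zero_comp
  have hzero : (πZ.app (op X.left)) ((preadditiveYoneda.map (h₂ : X.right ⟶ Z.right)).app
      (op X.left) X.hom) = 0 := by
    have h0 := ConcreteCategory.congr_hom (C := AddCommGrpCat.{u}) (congrArg (fun t => t.app (op X.left)) hcomp) (𝟙 X.left)
    exact h0
  obtain ⟨h₁, hh₁⟩ := hS' ((preadditiveYoneda.map (h₂ : X.right ⟶ Z.right)).app
      (op X.left) X.hom) hzero
  refine ⟨Arrow.homMk (u := (h₁ : X.left ⟶ Z.left)) (v := (h₂ : X.right ⟶ Z.right)) hh₁, ?_⟩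
  refine (cancel_epi (cokernel.π (preadditiveYoneda.map X.hom))).1 ?_
  rw [← ht]
  exact cokernel.π_desc _ _ _

/-- Let `Λ` be an artin algebra and `𝒞` a full subcategory of
`maps (mod Λ)` closed under isomorphisms.  If `𝒞` is covariantly finite in
`maps (mod Λ)`, then `Φ(𝒞)` is covariantly finite in `mod (mod Λ)`. -/
theorem phiImage_covariantlyFinite
    {R : Type u} [CommRing R] [IsArtinianRing R]
    {Λ : Type u} [Ring Λ] [Algebra R Λ] [Module.Finite R Λ]
    (𝒞 : Set (Arrow (FGModuleCat Λ)))
    (hiso : ∀ ⦃X Y : Arrow (FGModuleCat Λ)⦄, (X ≅ Y) → X ∈ 𝒞 → Y ∈ 𝒞)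
    (hcf : ∀ M : Arrow (FGModuleCat Λ), HasLeftApproximation 𝒞 M) :
    ∀ F : (FGModuleCat Λ)ᵒᵖ ⥤ AddCommGrpCat.{u}, IsFinitelyPresentedFunctor F →
      HasLeftApproximation (PhiImage 𝒞) F := by
  intro F hF
  obtain ⟨M₁, M₀, f, p, w, hEpi, hExact⟩ := hF
  haveI := hEpi
  have e : PhiObj (Arrow.mk f) ≅ F :=
    IsColimit.coconePointUniqueUpToIso (cokernelIsCokernel (preadditiveYoneda.map f))
      hExact.gIsCokernel
  obtain ⟨Z, a, hZ, happ⟩ := hcf (Arrow.mk f)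
  refine ⟨PhiObj Z, e.inv ≫ PhiMap a, ⟨Z, hZ, ⟨Iso.refl _⟩⟩, ?_⟩
  intro F' hF' u
  obtain ⟨Z', hZ', ⟨e'⟩⟩ := hF'
  obtain ⟨b, hb⟩ := exists_hom_of_phiHom (Arrow.mk f) Z' (e.hom ≫ u ≫ e'.inv)
  obtain ⟨c, hc⟩ := happ hZ' b
  refine ⟨PhiMap c ≫ e'.hom, ?_⟩
  rw [Category.assoc, ← Category.assoc (PhiMap a), ← PhiMap_comp, hc, hb]
  simp
end

section
/- Let Λ be an artin algebra and let 𝒞 be a full subcategory of maps(mod Λ), closed under isomorphisms and finite direct sums, that contains all objects of the form (0 → M) and (1_M : M → M) for M in mod Λ. If the full subcategory Φ^op(𝒞) of mod((mod Λ)^op), consisting of covariant functors isomorphic to Φ^op(Z) for some Z in 𝒞, is contravariantly finite in mod((mod Λ)^op), then 𝒞 is covariantly finite in maps(mod Λ). -/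
open CategoryTheory CategoryTheory.Limits Opposite

universe u

/-- The functor `Φᵒᵖ : maps (mod Λ) → mod ((mod Λ)ᵒᵖ)` on objects: it sends
`f : A₁ → A₀` to `Coker((f,−) : (A₀,−) → (A₁,−))`. -/
noncomputable def PhiOpObj {Λ : Type u} [Ring Λ] (a : Arrow (FGModuleCat Λ)) :
    FGModuleCat Λ ⥤ AddCommGrpCat.{u} :=
  cokernel (preadditiveCoyoneda.map a.hom.op)

/-- A covariant functor `G : mod Λ → Ab` is finitely presented if there is an exact
sequence `(M₀,−) → (M₁,−) → G → 0`. -/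
def IsFinitelyPresentedCovariantFunctor {Λ : Type u} [Ring Λ]
    (G : FGModuleCat Λ ⥤ AddCommGrpCat.{u}) : Prop :=
  ∃ (M₁ M₀ : FGModuleCat Λ) (f : M₁ ⟶ M₀) (p : preadditiveCoyoneda.obj (op M₁) ⟶ G)
    (w : preadditiveCoyoneda.map f.op ≫ p = 0),
    Epi p ∧ (ShortComplex.mk (preadditiveCoyoneda.map f.op) p w).Exact

/-- The full subcategory `Φᵒᵖ(𝒞)`: objects isomorphic to `Φᵒᵖ(Z)` for some `Z ∈ 𝒞`. -/
noncomputable def PhiOpImage {Λ : Type u} [Ring Λ] (𝒞 : Set (Arrow (FGModuleCat Λ))) :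
    Set (FGModuleCat Λ ⥤ AddCommGrpCat.{u}) :=
  {G | ∃ Z ∈ 𝒞, Nonempty (PhiOpObj Z ≅ G)}

/-- A set of objects is closed under finite direct sums if it contains any object `W`
which is simultaneously a product and a coproduct (in a compatible way) of two of its
members. -/
def ClosedUnderDirectSums {C : Type*} [Category C] (𝒳 : Set C) : Prop :=
  ∀ ⦃X Y W : C⦄, X ∈ 𝒳 → Y ∈ 𝒳 →
    ∀ (p : W ⟶ X) (q : W ⟶ Y) (i : X ⟶ W) (j : Y ⟶ W),
      i ≫ p = 𝟙 X → j ≫ q = 𝟙 Y →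
      Nonempty (IsLimit (BinaryFan.mk p q)) →
      Nonempty (IsColimit (BinaryCofan.mk i j)) →
      W ∈ 𝒳

section AuxHelpers

variable {Λ : Type u} [Ring Λ]

/-! ### Pointwise structure of cokernels in the functor category -/

lemma cokPi_surj {F G : FGModuleCat.{u} Λ ⥤ AddCommGrpCat.{u}} (η : F ⟶ G) (X : FGModuleCat.{u} Λ) :
    Function.Surjective ((cokernel.π η).app X) := by
  rw [← AddCommGrpCat.epi_iff_surjective]
  infer_instance

lemma cokPi_exact {F G : FGModuleCat.{u} Λ ⥤ AddCommGrpCat.{u}} (η : F ⟶ G) (X : FGModuleCat.{u} Λ)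
    (y : G.obj X) (hy : (cokernel.π η).app X y = 0) : ∃ x : F.obj X, η.app X x = y := by
  let S := ShortComplex.mk η (cokernel.π η) (cokernel.condition η)
  have hS : S.Exact := S.exact_of_g_is_cokernel (cokernelIsCokernel η)
  have hS' : (S.map ((evaluation _ _).obj X)).Exact := hS.map _
  rw [ShortComplex.ab_exact_iff] at hS'
  exact hS' y hy

/-! ### Yoneda-style computations for `preadditiveCoyoneda` -/

def coyoEl {X Y : FGModuleCat.{u} Λ} (f : X ⟶ Y) : (preadditiveCoyoneda.obj (op X)).obj Y := f

lemma coyo_obj_map {X Y Z : FGModuleCat.{u} Λ} (g : X ⟶ Y) (φ : Y ⟶ Z) :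
    (preadditiveCoyoneda.obj (op X)).map φ (coyoEl g) = coyoEl (g ≫ φ) := rfl

lemma coyo_map_app {X Y Z : FGModuleCat.{u} Λ} (f : X ⟶ Y) (g : Y ⟶ Z) :
    (preadditiveCoyoneda.map f.op).app Z (coyoEl g) = coyoEl (f ≫ g) := rfl

lemma coyo_app_eq {X : FGModuleCat.{u} Λ} {H : FGModuleCat.{u} Λ ⥤ AddCommGrpCat.{u}}
    (σ : preadditiveCoyoneda.obj (op X) ⟶ H) {Y : FGModuleCat.{u} Λ} (φ : X ⟶ Y) :
    σ.app Y (coyoEl φ) = H.map φ (σ.app X (coyoEl (𝟙 X))) := by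
  have h := σ.naturality φ
  have h2 := congrArg (fun (p : (preadditiveCoyoneda.obj (op X)).obj X ⟶ H.obj Y) =>
    p (coyoEl (𝟙 X))) h
  simp only [AddCommGrpCat.coe_comp, Function.comp_apply, coyo_obj_map, Category.id_comp] at h2
  exact h2

lemma coyo_hom_ext {X : FGModuleCat.{u} Λ} {H : FGModuleCat.{u} Λ ⥤ AddCommGrpCat.{u}}
    {σ τ : preadditiveCoyoneda.obj (op X) ⟶ H}
    (h : σ.app X (coyoEl (𝟙 X)) = τ.app X (coyoEl (𝟙 X))) : σ = τ := by
  ext Y φ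
  show σ.app Y (coyoEl (show X ⟶ Y from φ)) = τ.app Y (coyoEl (show X ⟶ Y from φ))
  rw [coyo_app_eq σ (show X ⟶ Y from φ), coyo_app_eq τ (show X ⟶ Y from φ), h]

lemma nt_app_el {F G : FGModuleCat.{u} Λ ⥤ AddCommGrpCat.{u}} {σ τ : F ⟶ G} (h : σ = τ)
    (X : FGModuleCat.{u} Λ) (x : F.obj X) : σ.app X x = τ.app X x := by rw [h]

lemma pi_app_comp_zero (a : Arrow (FGModuleCat.{u} Λ)) {X : FGModuleCat.{u} Λ} (s : a.right ⟶ X) :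
    (cokernel.π (preadditiveCoyoneda.map a.hom.op)).app X (coyoEl (a.hom ≫ s)) = 0 :=
  nt_app_el (cokernel.condition (preadditiveCoyoneda.map a.hom.op)) X (coyoEl s)

/-! ### The lifting lemma and the induced map `Φᵒᵖ(g)` -/

lemma lift_exists (C Z : Arrow (FGModuleCat.{u} Λ)) (α : PhiOpObj Z ⟶ PhiOpObj C) :
    ∃ (h₁ : C.left ⟶ Z.left) (h₀ : C.right ⟶ Z.right),
      C.hom ≫ h₀ = h₁ ≫ Z.hom ∧
      preadditiveCoyoneda.map h₁.op ≫ cokernel.π (preadditiveCoyoneda.map C.hom.op) =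
        cokernel.π (preadditiveCoyoneda.map Z.hom.op) ≫ α := by
  obtain ⟨u, hu⟩ := cokPi_surj (preadditiveCoyoneda.map C.hom.op) Z.left
    ((cokernel.π (preadditiveCoyoneda.map Z.hom.op) ≫ α).app Z.left (coyoEl (𝟙 Z.left)))
  let h₁ : C.left ⟶ Z.left := u
  have A : preadditiveCoyoneda.map h₁.op ≫ cokernel.π (preadditiveCoyoneda.map C.hom.op) =
      cokernel.π (preadditiveCoyoneda.map Z.hom.op) ≫ α := by
    apply coyo_hom_ext
    show (cokernel.π (preadditiveCoyoneda.map C.hom.op)).app Z.left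
      ((preadditiveCoyoneda.map h₁.op).app Z.left (coyoEl (𝟙 Z.left))) = _
    rw [coyo_map_app, Category.comp_id]
    exact hu
  have hz : (cokernel.π (preadditiveCoyoneda.map C.hom.op)).app Z.right
      (coyoEl (h₁ ≫ Z.hom)) = 0 := by
    have e0 := pi_app_comp_zero Z (𝟙 Z.right)
    rw [show Z.hom ≫ 𝟙 Z.right = Z.hom from Category.comp_id _] at e0
    have e2 : (cokernel.π (preadditiveCoyoneda.map C.hom.op)).app Z.right
        ((preadditiveCoyoneda.map h₁.op).app Z.right (coyoEl Z.hom)) =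
        α.app Z.right ((cokernel.π (preadditiveCoyoneda.map Z.hom.op)).app Z.right
          (coyoEl Z.hom)) := nt_app_el A Z.right (coyoEl Z.hom)
    rw [coyo_map_app, e0] at e2
    exact e2.trans (map_zero _)
  obtain ⟨x, hx⟩ := cokPi_exact (preadditiveCoyoneda.map C.hom.op) Z.right
    (coyoEl (h₁ ≫ Z.hom)) hz
  exact ⟨h₁, x, hx, A⟩

noncomputable def phiMap {C Z' : Arrow (FGModuleCat.{u} Λ)} (g : C ⟶ Z') :
    PhiOpObj Z' ⟶ PhiOpObj C :=
  cokernel.desc _ (preadditiveCoyoneda.map g.left.op ≫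
      cokernel.π (preadditiveCoyoneda.map C.hom.op)) (by
    unfold PhiOpObj
    rw [← Category.assoc, ← preadditiveCoyoneda.map_comp]
    have : (Z'.hom.op ≫ g.left.op) = (g.right.op ≫ C.hom.op) := by
      rw [← op_comp, ← op_comp, Arrow.w]
    rw [this, preadditiveCoyoneda.map_comp, Category.assoc, cokernel.condition, comp_zero])

lemma phiMap_pi {C Z' : Arrow (FGModuleCat.{u} Λ)} (g : C ⟶ Z') :
    cokernel.π (preadditiveCoyoneda.map Z'.hom.op) ≫ phiMap g =
      preadditiveCoyoneda.map g.left.op ≫ cokernel.π (preadditiveCoyoneda.map C.hom.op) :=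
  cokernel.π_desc _ _ _

lemma approx_data (C Z Z' : Arrow (FGModuleCat.{u} Λ)) (α : PhiOpObj Z ⟶ PhiOpObj C)
    (h₁ : C.left ⟶ Z.left)
    (A : preadditiveCoyoneda.map h₁.op ≫ cokernel.π (preadditiveCoyoneda.map C.hom.op) =
      cokernel.π (preadditiveCoyoneda.map Z.hom.op) ≫ α)
    (g : C ⟶ Z') (ν : PhiOpObj Z' ⟶ PhiOpObj Z) (hν : ν ≫ α = phiMap g) :
    ∃ (w₁ : Z.left ⟶ Z'.left) (w₀ : Z.right ⟶ Z'.right) (t : C.right ⟶ Z'.left),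
      Z.hom ≫ w₀ = w₁ ≫ Z'.hom ∧ C.hom ≫ t = g.left - h₁ ≫ w₁ := by
  obtain ⟨w₁, w₀, E2, Aw⟩ := lift_exists Z Z' ν
  have key : preadditiveCoyoneda.map w₁.op ≫ preadditiveCoyoneda.map h₁.op ≫
      cokernel.π (preadditiveCoyoneda.map C.hom.op) =
      preadditiveCoyoneda.map g.left.op ≫ cokernel.π (preadditiveCoyoneda.map C.hom.op) := by
    rw [A]; exact (Category.assoc _ _ _).symm.trans ((eq_whisker Aw α).trans
      ((Category.assoc _ _ _).trans ((whisker_eq _ hν).trans (phiMap_pi g))))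
  have e2 : (cokernel.π (preadditiveCoyoneda.map C.hom.op)).app Z'.left
      (coyoEl (h₁ ≫ (w₁ ≫ 𝟙 Z'.left))) =
      (cokernel.π (preadditiveCoyoneda.map C.hom.op)).app Z'.left
        (coyoEl (g.left ≫ 𝟙 Z'.left)) := nt_app_el key Z'.left (coyoEl (𝟙 Z'.left))
  rw [show w₁ ≫ 𝟙 Z'.left = w₁ from Category.comp_id _,
    show g.left ≫ 𝟙 Z'.left = g.left from Category.comp_id _] at e2
  have e3 : (cokernel.π (preadditiveCoyoneda.map C.hom.op)).app Z'.left
      (coyoEl (g.left - h₁ ≫ w₁)) = 0 := by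
    have hsub : (coyoEl (g.left - h₁ ≫ w₁) :
        (preadditiveCoyoneda.obj (op C.left)).obj Z'.left) =
        coyoEl g.left - coyoEl (h₁ ≫ w₁) := rfl
    rw [hsub, map_sub, e2, sub_self]
  obtain ⟨x, hx⟩ := cokPi_exact (preadditiveCoyoneda.map C.hom.op) Z'.left
    (coyoEl (g.left - h₁ ≫ w₁)) e3
  exact ⟨w₁, w₀, x, E2, hx⟩

end AuxHelpers

section AuxModule

variable {Λ : Type u} [Ring Λ]

noncomputable def lm {M N : FGModuleCat.{u} Λ} (l : M →ₗ[Λ] N) : M ⟶ N :=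
  ObjectProperty.homMk (ModuleCat.ofHom l)

lemma fg_comp_apply {M N P : FGModuleCat.{u} Λ} (f : M ⟶ N) (g : N ⟶ P) (x : M) :
    (f ≫ g) x = g (f x) := rfl

/-! ### Direct sums in the arrow category -/

noncomputable def dsum (a b : Arrow (FGModuleCat.{u} Λ)) : Arrow (FGModuleCat.{u} Λ) :=
  Arrow.mk (show FGModuleCat.of Λ (↥a.left × ↥b.left) ⟶ FGModuleCat.of Λ (↥a.right × ↥b.right)
    from lm (LinearMap.prodMap a.hom.hom.hom b.hom.hom.hom))

noncomputable def dsumP₁ (a b : Arrow (FGModuleCat.{u} Λ)) : dsum a b ⟶ a :=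
  Arrow.homMk (u := (lm (LinearMap.fst Λ ↥a.left ↥b.left) : (dsum a b).left ⟶ a.left))
    (v := (lm (LinearMap.fst Λ ↥a.right ↥b.right) : (dsum a b).right ⟶ a.right))
    (by apply FGModuleCat.hom_ext; apply LinearMap.ext; intro x; rfl)

noncomputable def dsumP₂ (a b : Arrow (FGModuleCat.{u} Λ)) : dsum a b ⟶ b :=
  Arrow.homMk (u := (lm (LinearMap.snd Λ ↥a.left ↥b.left) : (dsum a b).left ⟶ b.left))
    (v := (lm (LinearMap.snd Λ ↥a.right ↥b.right) : (dsum a b).right ⟶ b.right))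
    (by apply FGModuleCat.hom_ext; apply LinearMap.ext; intro x; rfl)

noncomputable def dsumI₁ (a b : Arrow (FGModuleCat.{u} Λ)) : a ⟶ dsum a b :=
  Arrow.homMk (u := (lm (LinearMap.inl Λ ↥a.left ↥b.left) : a.left ⟶ (dsum a b).left))
    (v := (lm (LinearMap.inl Λ ↥a.right ↥b.right) : a.right ⟶ (dsum a b).right))
    (by apply FGModuleCat.hom_ext; apply LinearMap.ext; intro x; refine Prod.ext rfl ?_; exact map_zero b.hom.hom.hom)

noncomputable def dsumI₂ (a b : Arrow (FGModuleCat.{u} Λ)) : b ⟶ dsum a b :=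
  Arrow.homMk (u := (lm (LinearMap.inr Λ ↥a.left ↥b.left) : b.left ⟶ (dsum a b).left))
    (v := (lm (LinearMap.inr Λ ↥a.right ↥b.right) : b.right ⟶ (dsum a b).right))
    (by apply FGModuleCat.hom_ext; apply LinearMap.ext; intro x; refine Prod.ext ?_ rfl; exact map_zero a.hom.hom.hom)

noncomputable def dsumIsLimit (a b : Arrow (FGModuleCat.{u} Λ)) :
    IsLimit (BinaryFan.mk (dsumP₁ a b) (dsumP₂ a b)) := by
  refine BinaryFan.isLimitMk (fun s => ?_) (fun s => ?_) (fun s => ?_) (fun s m h₁ h₂ => ?_)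
  · exact Arrow.homMk
      (u := (lm (LinearMap.prod (BinaryFan.fst s).left.hom.hom (BinaryFan.snd s).left.hom.hom) :
        s.pt.left ⟶ (dsum a b).left))
      (v := (lm (LinearMap.prod (BinaryFan.fst s).right.hom.hom (BinaryFan.snd s).right.hom.hom) :
        s.pt.right ⟶ (dsum a b).right))
      (by
        apply FGModuleCat.hom_ext; apply LinearMap.ext; intro x
        have h1 : a.hom ((BinaryFan.fst s).left x) = (BinaryFan.fst s).right (s.pt.hom x) :=
          ConcreteCategory.congr_hom (Arrow.w (BinaryFan.fst s)) x
        have h2 : b.hom ((BinaryFan.snd s).left x) = (BinaryFan.snd s).right (s.pt.hom x) :=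
          ConcreteCategory.congr_hom (Arrow.w (BinaryFan.snd s)) x
        exact Prod.ext h1 h2)
  · apply CommaMorphism.ext <;> (apply FGModuleCat.hom_ext; apply LinearMap.ext; intro x; rfl)
  · apply CommaMorphism.ext <;> (apply FGModuleCat.hom_ext; apply LinearMap.ext; intro x; rfl)
  · apply CommaMorphism.ext
    · apply FGModuleCat.hom_ext; apply LinearMap.ext; intro x
      refine Prod.ext ?_ ?_
      · exact ConcreteCategory.congr_hom (congrArg CommaMorphism.left h₁) x
      · exact ConcreteCategory.congr_hom (congrArg CommaMorphism.left h₂) x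
    · apply FGModuleCat.hom_ext; apply LinearMap.ext; intro x
      refine Prod.ext ?_ ?_
      · exact ConcreteCategory.congr_hom (congrArg CommaMorphism.right h₁) x
      · exact ConcreteCategory.congr_hom (congrArg CommaMorphism.right h₂) x

noncomputable def dsumIsColimit (a b : Arrow (FGModuleCat.{u} Λ)) :
    IsColimit (BinaryCofan.mk (dsumI₁ a b) (dsumI₂ a b)) := by
  refine BinaryCofan.isColimitMk (fun s => ?_) (fun s => ?_) (fun s => ?_) (fun s m h₁ h₂ => ?_)
  · exact Arrow.homMk
      (u := (lm (LinearMap.coprod (BinaryCofan.inl s).left.hom.hom (BinaryCofan.inr s).left.hom.hom) :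
        (dsum a b).left ⟶ s.pt.left))
      (v := (lm (LinearMap.coprod (BinaryCofan.inl s).right.hom.hom (BinaryCofan.inr s).right.hom.hom) :
        (dsum a b).right ⟶ s.pt.right))
      (by
        apply FGModuleCat.hom_ext; apply LinearMap.ext; intro x
        have h1 : s.pt.hom ((BinaryCofan.inl s).left x.1) = (BinaryCofan.inl s).right (a.hom x.1) :=
          ConcreteCategory.congr_hom (Arrow.w (BinaryCofan.inl s)) x.1
        have h2 : s.pt.hom ((BinaryCofan.inr s).left x.2) = (BinaryCofan.inr s).right (b.hom x.2) :=
          ConcreteCategory.congr_hom (Arrow.w (BinaryCofan.inr s)) x.2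
        show s.pt.hom ((show ↥s.pt.left from (BinaryCofan.inl s).left.hom.hom x.1) + (show ↥s.pt.left from (BinaryCofan.inr s).left.hom.hom x.2)) =
          (show ↥s.pt.right from (BinaryCofan.inl s).right.hom.hom (a.hom x.1)) + (show ↥s.pt.right from (BinaryCofan.inr s).right.hom.hom (b.hom x.2))
        rw [map_add]
        exact congrArg₂ (· + ·) h1 h2)
  · apply CommaMorphism.ext
    · apply FGModuleCat.hom_ext; apply LinearMap.ext; intro x
      show LinearMap.coprod (BinaryCofan.inl s).left.hom.hom (BinaryCofan.inr s).left.hom.hom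
        (LinearMap.inl Λ ↥a.left ↥b.left x) = (BinaryCofan.inl s).left x
      show _ + (BinaryCofan.inr s).left.hom.hom 0 = _; rw [map_zero, add_zero]; rfl
    · apply FGModuleCat.hom_ext; apply LinearMap.ext; intro x
      show LinearMap.coprod (BinaryCofan.inl s).right.hom.hom (BinaryCofan.inr s).right.hom.hom
        (LinearMap.inl Λ ↥a.right ↥b.right x) = (BinaryCofan.inl s).right x
      show _ + (BinaryCofan.inr s).right.hom.hom 0 = _; rw [map_zero, add_zero]; rfl
  · apply CommaMorphism.ext
    · apply FGModuleCat.hom_ext; apply LinearMap.ext; intro x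
      show LinearMap.coprod (BinaryCofan.inl s).left.hom.hom (BinaryCofan.inr s).left.hom.hom
        (LinearMap.inr Λ ↥a.left ↥b.left x) = (BinaryCofan.inr s).left x
      show (BinaryCofan.inl s).left.hom.hom 0 + _ = _; rw [map_zero, zero_add]; rfl
    · apply FGModuleCat.hom_ext; apply LinearMap.ext; intro x
      show LinearMap.coprod (BinaryCofan.inl s).right.hom.hom (BinaryCofan.inr s).right.hom.hom
        (LinearMap.inr Λ ↥a.right ↥b.right x) = (BinaryCofan.inr s).right x
      show (BinaryCofan.inl s).right.hom.hom 0 + _ = _; rw [map_zero, zero_add]; rfl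
  · apply CommaMorphism.ext
    · apply FGModuleCat.hom_ext; apply LinearMap.ext; intro x
      have k1 : m.left (x.1, (0 : ↥b.left)) = (BinaryCofan.inl s).left x.1 :=
        ConcreteCategory.congr_hom (congrArg CommaMorphism.left h₁) x.1
      have k2 : m.left ((0 : ↥a.left), x.2) = (BinaryCofan.inr s).left x.2 :=
        ConcreteCategory.congr_hom (congrArg CommaMorphism.left h₂) x.2
      show m.left x = (show ↥s.pt.left from (BinaryCofan.inl s).left.hom.hom x.1) + (show ↥s.pt.left from (BinaryCofan.inr s).left.hom.hom x.2)
      calc m.left x = m.left ((x.1, 0) + (0, x.2)) := by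
            congr 1; exact Prod.ext (add_zero _).symm (zero_add _).symm
        _ = m.left (x.1, 0) + m.left (0, x.2) := map_add _ _ _
        _ = _ := congrArg₂ (· + ·) k1 k2
    · apply FGModuleCat.hom_ext; apply LinearMap.ext; intro x
      have k1 : m.right (x.1, (0 : ↥b.right)) = (BinaryCofan.inl s).right x.1 :=
        ConcreteCategory.congr_hom (congrArg CommaMorphism.right h₁) x.1
      have k2 : m.right ((0 : ↥a.right), x.2) = (BinaryCofan.inr s).right x.2 :=
        ConcreteCategory.congr_hom (congrArg CommaMorphism.right h₂) x.2
      show m.right x = (show ↥s.pt.right from (BinaryCofan.inl s).right.hom.hom x.1) + (show ↥s.pt.right from (BinaryCofan.inr s).right.hom.hom x.2)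
      calc m.right x = m.right ((x.1, 0) + (0, x.2)) := by
            congr 1; exact Prod.ext (add_zero _).symm (zero_add _).symm
        _ = m.right (x.1, 0) + m.right (0, x.2) := map_add _ _ _
        _ = _ := congrArg₂ (· + ·) k1 k2

theorem dsum_mem {𝒞 : Set (Arrow (FGModuleCat.{u} Λ))} (hsum : ClosedUnderDirectSums 𝒞)
    {a b : Arrow (FGModuleCat.{u} Λ)} (ha : a ∈ 𝒞) (hb : b ∈ 𝒞) : dsum a b ∈ 𝒞 := by
  refine hsum ha hb (dsumP₁ a b) (dsumP₂ a b) (dsumI₁ a b) (dsumI₂ a b) ?_ ?_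
    ⟨dsumIsLimit a b⟩ ⟨dsumIsColimit a b⟩
  · apply CommaMorphism.ext <;> (apply FGModuleCat.hom_ext; apply LinearMap.ext; intro x; rfl)
  · apply CommaMorphism.ext <;> (apply FGModuleCat.hom_ext; apply LinearMap.ext; intro x; rfl)

/-! ### The zero module and cokernel modules -/

noncomputable def zeroMod : FGModuleCat.{u} Λ := FGModuleCat.of Λ PUnit.{u+1}

instance : Subsingleton (↥(zeroMod (Λ := Λ))) := by
  show Subsingleton PUnit; infer_instance

instance : Subsingleton (↑(zeroMod (Λ := Λ)).obj) := by
  show Subsingleton PUnit; infer_instance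

lemma zeroMod_isZero : IsZero (zeroMod (Λ := Λ)) := by
  constructor
  · intro Y
    refine ⟨⟨⟨0⟩, fun f => ?_⟩⟩
    apply FGModuleCat.hom_ext; apply LinearMap.ext; intro x
    have hx : x = 0 := Subsingleton.elim _ _
    rw [hx, map_zero]; rfl
  · intro Y
    refine ⟨⟨⟨0⟩, fun f => ?_⟩⟩
    apply FGModuleCat.hom_ext; apply LinearMap.ext; intro x
    exact Subsingleton.elim _ _

noncomputable def cokMod (a : Arrow (FGModuleCat.{u} Λ)) : FGModuleCat.{u} Λ :=
  FGModuleCat.of Λ (↥a.right ⧸ LinearMap.range (a.hom.hom.hom : ↥a.left →ₗ[Λ] ↥a.right))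

noncomputable def cokProj (a : Arrow (FGModuleCat.{u} Λ)) : a.right ⟶ cokMod a :=
  lm (LinearMap.range (a.hom.hom.hom : ↥a.left →ₗ[Λ] ↥a.right)).mkQ

lemma cokProj_comp (a : Arrow (FGModuleCat.{u} Λ)) (x : ↥a.left) : cokProj a (a.hom x) = 0 := by
  show (Submodule.Quotient.mk (a.hom.hom.hom x) : ↥a.right ⧸ LinearMap.range a.hom.hom.hom) = 0
  rw [Submodule.Quotient.mk_eq_zero]
  exact ⟨x, rfl⟩

noncomputable def cokLift (a : Arrow (FGModuleCat.{u} Λ)) {X : FGModuleCat.{u} Λ} (δ : a.right ⟶ X)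
    (h : ∀ x : ↥a.left, δ (a.hom x) = 0) : cokMod a ⟶ X :=
  lm <| Submodule.liftQ _ (δ.hom.hom : ↥a.right →ₗ[Λ] ↥X) (by
    rintro y ⟨x, rfl⟩
    exact h x)

lemma cokLift_proj (a : Arrow (FGModuleCat.{u} Λ)) {X : FGModuleCat.{u} Λ} (δ : a.right ⟶ X)
    (h : ∀ x : ↥a.left, δ (a.hom x) = 0) (y : ↥a.right) :
    cokLift a δ h (cokProj a y) = δ y := rfl

/-! ### The approximation object and the approximation morphism -/

noncomputable def bigW (C Z : Arrow (FGModuleCat.{u} Λ)) : Arrow (FGModuleCat.{u} Λ) :=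
  dsum (dsum Z (Arrow.mk (𝟙 C.right))) (Arrow.mk (0 : zeroMod ⟶ cokMod C))

noncomputable def bigPhi (C Z : Arrow (FGModuleCat.{u} Λ)) (h₁ : C.left ⟶ Z.left)
    (h₀ : C.right ⟶ Z.right) (E1 : C.hom ≫ h₀ = h₁ ≫ Z.hom) : C ⟶ bigW C Z :=
  Arrow.homMk
    (u := (lm (LinearMap.prod (LinearMap.prod (h₁.hom.hom : ↥C.left →ₗ[Λ] ↥Z.left)
      (C.hom.hom.hom : ↥C.left →ₗ[Λ] ↥C.right)) 0) : C.left ⟶ (bigW C Z).left))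
    (v := (lm (LinearMap.prod (LinearMap.prod (h₀.hom.hom : ↥C.right →ₗ[Λ] ↥Z.right) LinearMap.id)
      ((cokProj C).hom.hom : ↥C.right →ₗ[Λ] ↥(cokMod C))) : C.right ⟶ (bigW C Z).right))
    (by
      apply FGModuleCat.hom_ext; apply LinearMap.ext; intro x
      refine Prod.ext (Prod.ext ?_ rfl) ?_
      · exact (ConcreteCategory.congr_hom E1 x).symm
      · exact (cokProj_comp C x).symm)

noncomputable def bigV (C Z Z' : Arrow (FGModuleCat.{u} Λ)) (w₁ : Z.left ⟶ Z'.left)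
    (w₀ : Z.right ⟶ Z'.right) (t : C.right ⟶ Z'.left) (δ : C.right ⟶ Z'.right)
    (hδ : ∀ x : ↥C.left, δ (C.hom x) = 0) (E2 : Z.hom ≫ w₀ = w₁ ≫ Z'.hom) :
    bigW C Z ⟶ Z' :=
  Arrow.homMk
    (u := (lm ((LinearMap.coprod (w₁.hom.hom : ↥Z.left →ₗ[Λ] ↥Z'.left)
        (t.hom.hom : ↥C.right →ₗ[Λ] ↥Z'.left)).comp
        (LinearMap.fst Λ (↥Z.left × ↥C.right) ↥(zeroMod (Λ := Λ)))) :
        (bigW C Z).left ⟶ Z'.left))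
    (v := (lm (LinearMap.coprod (LinearMap.coprod (w₀.hom.hom : ↥Z.right →ₗ[Λ] ↥Z'.right)
        ((t ≫ Z'.hom : C.right ⟶ Z'.right).hom.hom : ↥C.right →ₗ[Λ] ↥Z'.right))
        ((cokLift C δ hδ).hom.hom : ↥(cokMod C) →ₗ[Λ] ↥Z'.right)) :
        (bigW C Z).right ⟶ Z'.right))
    (by
      apply FGModuleCat.hom_ext; apply LinearMap.ext
      intro p
      have e2 : w₀ (Z.hom p.1.1) = Z'.hom (w₁ p.1.1) :=
        ConcreteCategory.congr_hom E2 p.1.1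
      show (show ↥Z'.right from Z'.hom (w₁ p.1.1 + t p.1.2)) =
        (w₀ (Z.hom p.1.1) + (show ↥Z'.right from Z'.hom (t p.1.2))) + cokLift C δ hδ 0
      rw [map_add, e2, map_zero, add_zero])

end AuxModule

/-- Let `Λ` be an artin algebra and `𝒞` a full subcategory of
`maps (mod Λ)`, closed under isomorphisms and finite direct sums, containing all objects
`(0 → M)` and `(1_M : M → M)`.  If `Φᵒᵖ(𝒞)` is contravariantly finite in
`mod ((mod Λ)ᵒᵖ)`, then `𝒞` is covariantly finite in `maps (mod Λ)`. -/
theorem covariantlyFinite_of_phiOpImage_contravariantlyFinite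
    {R : Type u} [CommRing R] [IsArtinianRing R]
    {Λ : Type u} [Ring Λ] [Algebra R Λ] [Module.Finite R Λ]
    (𝒞 : Set (Arrow (FGModuleCat Λ)))
    (hiso : ∀ ⦃X Y : Arrow (FGModuleCat Λ)⦄, (X ≅ Y) → X ∈ 𝒞 → Y ∈ 𝒞)
    (hsum : ClosedUnderDirectSums 𝒞)
    (hzero : ∀ (M Z : FGModuleCat Λ), IsZero Z → Arrow.mk (0 : Z ⟶ M) ∈ 𝒞)
    (hid : ∀ M : FGModuleCat Λ, Arrow.mk (𝟙 M) ∈ 𝒞)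
    (hcf : ∀ G : FGModuleCat Λ ⥤ AddCommGrpCat.{u}, IsFinitelyPresentedCovariantFunctor G →
      HasRightApproximation (PhiOpImage 𝒞) G) :
    ∀ M : Arrow (FGModuleCat Λ), HasLeftApproximation 𝒞 M := by
  intro C
  -- `Φᵒᵖ(C)` is finitely presented
  have hfp : IsFinitelyPresentedCovariantFunctor (PhiOpObj C) :=
    ⟨C.left, C.right, C.hom, cokernel.π _, cokernel.condition _, (inferInstance : Epi (cokernel.π (preadditiveCoyoneda.map C.hom.op))),
      ShortComplex.exact_of_g_is_cokernel _ (cokernelIsCokernel _)⟩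
  -- get a right `Φᵒᵖ(𝒞)`-approximation of `Φᵒᵖ(C)`
  obtain ⟨G, ρ, hGmem, happrox⟩ := hcf _ hfp
  obtain ⟨Z, hZmem, ⟨e⟩⟩ := hGmem
  -- lift it to a morphism of arrows `C ⟶ Z`
  obtain ⟨h₁, h₀, E1, A⟩ := lift_exists C Z (e.hom ≫ ρ)
  refine ⟨bigW C Z, bigPhi C Z h₁ h₀ E1, ?_, ?_⟩
  · exact dsum_mem hsum (dsum_mem hsum hZmem (hid C.right))
      (hzero (cokMod C) zeroMod zeroMod_isZero)
  · intro Z' hZ' g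
    -- factor `Φᵒᵖ(g)` through the right approximation
    obtain ⟨ν₀, hν₀⟩ := happrox ⟨Z', hZ', ⟨Iso.refl _⟩⟩ (phiMap g)
    have hν : (ν₀ ≫ e.inv) ≫ (e.hom ≫ ρ) = phiMap g := by
      rw [Category.assoc, Iso.inv_hom_id_assoc]; exact hν₀
    obtain ⟨w₁, w₀, t, E2, E3⟩ := approx_data C Z Z' (e.hom ≫ ρ) h₁ A g (ν₀ ≫ e.inv) hν
    -- the error term
    have hδ : ∀ x : ↥C.left,
        (g.right - h₀ ≫ w₀ - (t ≫ Z'.hom : C.right ⟶ Z'.right)) (C.hom x) = 0 := by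
      intro x
      dsimp only [Functor.id_obj]
      show g.right (C.hom x) - w₀ (h₀ (C.hom x)) -
        (show ↥Z'.right from Z'.hom (t (C.hom x))) = 0
      have a1 : (Z'.hom (g.left x) : ↥Z'.right) = g.right (C.hom x) :=
        ConcreteCategory.congr_hom (Arrow.w g) x
      have a2 : h₀ (C.hom x) = (Z.hom (h₁ x) : ↥Z.right) := ConcreteCategory.congr_hom E1 x
      have a3 : w₀ (Z.hom (h₁ x)) = (Z'.hom (w₁ (h₁ x)) : ↥Z'.right) :=
        ConcreteCategory.congr_hom E2 (h₁ x)
      have a4 : t (C.hom x) = (g.left x : ↥Z'.left) - w₁ (h₁ x) := ConcreteCategory.congr_hom E3 x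
      rw [← a1, a2, a3, a4, map_sub]
      exact sub_self _
    refine ⟨bigV C Z Z' w₁ w₀ t (g.right - h₀ ≫ w₀ - (t ≫ Z'.hom : C.right ⟶ Z'.right))
      hδ E2, ?_⟩
    apply CommaMorphism.ext
    · apply FGModuleCat.hom_ext; apply LinearMap.ext; intro x
      have a4 : t (C.hom x) = (g.left x : ↥Z'.left) - w₁ (h₁ x) := ConcreteCategory.congr_hom E3 x
      show w₁ (h₁ x) + t (C.hom x) = (g.left x : ↥Z'.left)
      rw [a4, add_sub_cancel]
    · apply FGModuleCat.hom_ext; apply LinearMap.ext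
      intro y
      show (w₀ (h₀ y) + (show ↥Z'.right from Z'.hom (t y))) +
        cokLift C (g.right - h₀ ≫ w₀ - (t ≫ Z'.hom : C.right ⟶ Z'.right)) hδ (cokProj C y) =
        g.right y
      rw [cokLift_proj]
      show (w₀ (h₀ y) + (show ↥Z'.right from Z'.hom (t y))) +
        (g.right y - w₀ (h₀ y) - (show ↥Z'.right from Z'.hom (t y))) = g.right y
      abel
end

section
/- Let Λ be an artin algebra and let f : M₁ → M₂ be a morphism in mod Λ. Then the morphism in maps(mod Λ) from (f' : M₁ → Im f) to (f : M₁ → M₂) with components 1_{M₁} and the inclusion j : Im f → M₂ (where f = j ∘ f' is the image factorization) is a right epimaps(mod Λ)-approximation of f. Consequently epimaps(mod Λ) is contravariantly finite in maps(mod Λ). -/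
open CategoryTheory CategoryTheory.Limits

universe u

/-- The full subcategory of `maps (mod Λ)` consisting of the epimorphisms. -/
def Epimaps (Λ : Type u) [Ring Λ] : Set (Arrow (FGModuleCat Λ)) :=
  {a | Function.Surjective ⇑a.hom}

lemma aux_approx {Λ : Type u} [Ring Λ]
    {M₁ M₂ I : FGModuleCat Λ} (f : M₁ ⟶ M₂) (f' : M₁ ⟶ I) (j : I ⟶ M₂)
    (hf' : Function.Surjective ⇑f') (hj : Function.Injective ⇑j) (hfac : f' ≫ j = f) :
    IsRightApproximation (Epimaps Λ) (Z := Arrow.mk f') (M := Arrow.mk f)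
      (Arrow.homMk (u := 𝟙 M₁) (v := j) (by simp [hfac])) := by
  constructor
  · exact hf'
  · intro Z' hZ' u
    have hw : ∀ x, u.right (Z'.hom x) = j (f' (u.left x)) := by
      intro x
      have := u.w
      have h1 : u.left ≫ (Arrow.mk f).hom = Z'.hom ≫ u.right := this
      have h2 : f (u.left x) = u.right (Z'.hom x) := ConcreteCategory.congr_hom h1 x
      rw [← h2]; exact (ConcreteCategory.congr_hom hfac (u.left x)).symm
    have hrange : ∀ y : Z'.right, u.right y ∈ LinearMap.range (j.hom.hom : I →ₗ[Λ] M₂) := by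
      intro y
      obtain ⟨x, rfl⟩ := hZ' y
      exact ⟨f' (u.left x), (hw x).symm⟩
    let e := LinearEquiv.ofInjective (f := (j.hom.hom : I →ₗ[Λ] M₂)) hj
    let vr : Z'.right →ₗ[Λ] I :=
      e.symm.toLinearMap ∘ₗ (u.right.hom.hom : Z'.right →ₗ[Λ] M₂).codRestrict _ hrange
    have hjvr : ∀ y, j (vr y) = u.right y := by
      intro y
      show ((j.hom.hom : I →ₗ[Λ] M₂) (e.symm ⟨u.right y, hrange y⟩)) = u.right y
      have h := LinearEquiv.ofInjective_apply (f := (j.hom.hom : I →ₗ[Λ] M₂)) (h := hj)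
        (e.symm ⟨u.right y, hrange y⟩)
      rw [show LinearEquiv.ofInjective (f := (j.hom.hom : I →ₗ[Λ] M₂)) hj = e from rfl,
        e.apply_symm_apply] at h
      exact h.symm
    have hcomm : u.left ≫ (Arrow.mk f').hom = Z'.hom ≫ (ConcreteCategory.ofHom vr : Z'.right ⟶ I) := by
      ext x
      apply hj
      show j (f' (u.left x)) = j (vr (Z'.hom x))
      rw [hjvr, hw]
    refine ⟨Arrow.homMk (u := u.left) (v := ConcreteCategory.ofHom vr) hcomm, ?_⟩
    ext
    · rfl
    · exact hjvr _

/-- Let `Λ` be an artin algebra and `f : M₁ → M₂` in `mod Λ`, with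
image factorization `f = j ∘ f'`, `f' : M₁ ↠ Im f`, `j : Im f ↪ M₂`.  The morphism
`(1_{M₁}, j) : (f' : M₁ → Im f) ⟶ (f : M₁ → M₂)` in `maps (mod Λ)` is a right
`epimaps (mod Λ)`-approximation of `f`; consequently `epimaps (mod Λ)` is
contravariantly finite in `maps (mod Λ)`. -/
theorem epimaps_rightApproximation
    {R : Type u} [CommRing R] [IsArtinianRing R]
    {Λ : Type u} [Ring Λ] [Algebra R Λ] [Module.Finite R Λ]
    {M₁ M₂ I : FGModuleCat Λ} (f : M₁ ⟶ M₂) (f' : M₁ ⟶ I) (j : I ⟶ M₂)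
    (hf' : Function.Surjective ⇑f') (hj : Function.Injective ⇑j) (hfac : f' ≫ j = f) :
    IsRightApproximation (Epimaps Λ) (Z := Arrow.mk f') (M := Arrow.mk f)
      (Arrow.homMk (u := 𝟙 M₁) (v := j) (by simp [hfac])) ∧
    ∀ a : Arrow (FGModuleCat Λ), HasRightApproximation (Epimaps Λ) a := by
  refine ⟨aux_approx f f' j hf' hj hfac, fun a => ?_⟩
  let g : a.left →ₗ[Λ] a.right := a.hom.hom.hom
  let K : FGModuleCat Λ := FGModuleCat.of Λ (LinearMap.range g)
  let g' : a.left ⟶ K := ConcreteCategory.ofHom g.rangeRestrict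
  let i : K ⟶ a.right := ConcreteCategory.ofHom (LinearMap.range g).subtype
  have hfac' : g' ≫ i = a.hom := by
    ext x; rfl
  have ha : Arrow.mk a.hom = a := rfl
  refine ⟨Arrow.mk g', Arrow.homMk (u := 𝟙 a.left) (v := i) (by simp [hfac']), ?_⟩
  exact aux_approx a.hom g' i (LinearMap.surjective_rangeRestrict g)
    (Submodule.injective_subtype _) hfac'
end

section
/- Let Λ be an artin algebra, let f : M₁ → M₂ be a morphism in mod Λ, and let p : P → M₂ be an epimorphism with P a projective Λ-module. Then the morphism in maps(mod Λ) from (f : M₁ → M₂) to ([f p] : M₁ ⊕ P → M₂), with components the inclusion M₁ → M₁ ⊕ P and 1_{M₂}, is a left epimaps(mod Λ)-approximation of f. Consequently epimaps(mod Λ) is covariantly finite, and hence functorially finite, in maps(mod Λ). -/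
open CategoryTheory CategoryTheory.Limits

universe u

/-- The main construction: the inclusion into `[f p] : M₁ ⊕ P → M₂` is a left
`Epimaps`-approximation. -/
theorem epimaps_main {Λ : Type u} [Ring Λ]
    {M₁ M₂ P W : FGModuleCat Λ} (f : M₁ ⟶ M₂) (p : P ⟶ M₂)
    (hP : Module.Projective Λ P) (hp : Function.Surjective ⇑p)
    (i₁ : M₁ ⟶ W) (i₂ : P ⟶ W) (hW : Nonempty (IsColimit (BinaryCofan.mk i₁ i₂)))
    (q : W ⟶ M₂) (hq₁ : i₁ ≫ q = f) (hq₂ : i₂ ≫ q = p) :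
    IsLeftApproximation (Epimaps Λ) (M := Arrow.mk f) (Z := Arrow.mk q)
      (Arrow.homMk (u := i₁) (v := 𝟙 M₂) (by simp [hq₁])) := by
  obtain ⟨c⟩ := hW
  constructor
  · -- `q` is surjective
    intro x
    obtain ⟨y, hy⟩ := hp x
    exact ⟨i₂ y, by rw [← hy, ← hq₂]; rfl⟩
  · intro Z' hZ' u
    -- lift `p ≫ u.right` through the surjection `Z'.hom`
    obtain ⟨l, hl⟩ := Module.projective_lifting_property (h := hP)
      Z'.hom.hom.hom (p ≫ u.right).hom.hom hZ'
    set s : BinaryCofan M₁ P := BinaryCofan.mk (u.left : M₁ ⟶ Z'.left)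
      (show P ⟶ Z'.left from ConcreteCategory.ofHom l) with hs
    have fac₁ : i₁ ≫ c.desc s = u.left := c.fac s ⟨WalkingPair.left⟩
    have fac₂ : i₂ ≫ c.desc s = (show P ⟶ Z'.left from ConcreteCategory.ofHom l) := c.fac s ⟨WalkingPair.right⟩
    have sq : c.desc s ≫ Z'.hom = q ≫ u.right := by
      apply BinaryCofan.IsColimit.hom_ext c
      · show i₁ ≫ c.desc s ≫ Z'.hom = i₁ ≫ q ≫ u.right
        exact (Category.assoc _ _ _).symm.trans ((congrArg (· ≫ Z'.hom) fac₁).trans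
          (u.w.trans (by show f ≫ u.right = i₁ ≫ q ≫ u.right; rw [← Category.assoc, hq₁])))
      · show i₂ ≫ c.desc s ≫ Z'.hom = i₂ ≫ q ≫ u.right
        exact (Category.assoc _ _ _).symm.trans ((congrArg (· ≫ Z'.hom) fac₂).trans
          ((FGModuleCat.hom_ext hl).trans
            (by show p ≫ u.right = i₂ ≫ q ≫ u.right; rw [← Category.assoc, hq₂])))
    refine ⟨Arrow.homMk (u := c.desc s) (v := u.right) sq, ?_⟩
    apply Arrow.hom_ext
    · exact fac₁
    · exact Category.id_comp _

universe v

/-- Every finitely generated module over an artin algebra is a quotient of a finitely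
generated projective module living in the same universe. -/
theorem exists_small_projective {R : Type u} [CommRing R] [IsArtinianRing R]
    {Λ : Type u} [Ring Λ] [Algebra R Λ] [Module.Finite R Λ]
    (B : Type v) [AddCommGroup B] [Module Λ B] [Module.Finite Λ B] :
    ∃ (Q : Type v) (_ : AddCommGroup Q) (_ : Module Λ Q) (_ : Module.Finite Λ Q)
      (_ : Module.Projective Λ Q) (p : Q →ₗ[Λ] B), Function.Surjective p := by
  classical
  have mo : ∀ {I : Ideal R} (q : R ⧸ I), Ideal.Quotient.mk I q.out = q :=
    fun q => Quotient.out_eq q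
  let J : Ideal R :=
    { carrier := {r | ∀ b : B, algebraMap R Λ r • b = 0}
      add_mem' := fun {x y} hx hy b => by simp [add_smul, hx b, hy b]
      zero_mem' := fun b => by simp
      smul_mem' := fun c x hx b => by simp [smul_eq_mul, map_mul, mul_smul, hx b] }
  have hJ : ∀ r ∈ J, ∀ b : B, algebraMap R Λ r • b = 0 := fun r hr => hr
  have hsmall1 : Small.{v} (R ⧸ J) := by
    refine small_of_injective (f := fun q : R ⧸ J => fun b : B => algebraMap R Λ q.out • b) ?_
    intro q₁ q₂ h
    rw [← mo q₁, ← mo q₂, Ideal.Quotient.eq]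
    show ∀ b : B, algebraMap R Λ (q₁.out - q₂.out) • b = 0
    intro b
    have := congrFun h b
    simp only at this
    rw [map_sub, sub_smul, this, sub_self]
  have hsmallk : ∀ k : ℕ, Small.{v} (R ⧸ J ^ k) := by
    intro k
    induction k with
    | zero =>
      refine small_of_surjective (f := fun _ : PUnit.{v+1} => (0 : R ⧸ J ^ 0)) ?_
      intro x
      obtain ⟨y, rfl⟩ := Ideal.Quotient.mk_surjective x
      exact ⟨PUnit.unit, (Ideal.Quotient.eq_zero_iff_mem.mpr (by simp)).symm⟩
    | succ k ih =>
      haveI := ih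
      haveI := hsmall1
      obtain ⟨m, g, hg⟩ :=
        (Submodule.fg_iff_exists_fin_generating_family).mp (IsNoetherian.noetherian (J ^ k))
      refine small_of_surjective (f := fun z : (R ⧸ J ^ k) × (Fin m → R ⧸ J) =>
        Ideal.Quotient.mk (J ^ (k + 1)) (z.1.out + ∑ i, (z.2 i).out * g i)) ?_
      intro x
      obtain ⟨x, rfl⟩ := Ideal.Quotient.mk_surjective x
      have h1 : x - (Ideal.Quotient.mk (J ^ k) x).out ∈ Submodule.span R (Set.range g) := by
        rw [hg, ← Ideal.Quotient.eq, mo]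
      rw [Submodule.mem_span_range_iff_exists_fun] at h1
      obtain ⟨c, hc⟩ := h1
      refine ⟨(Ideal.Quotient.mk (J ^ k) x, fun i => Ideal.Quotient.mk J (c i)), ?_⟩
      simp only
      rw [Ideal.Quotient.eq]
      have h2 : ((Ideal.Quotient.mk (J ^ k) x).out + ∑ i, (Ideal.Quotient.mk J (c i)).out * g i) - x
          = ∑ i, ((Ideal.Quotient.mk J (c i)).out - c i) * g i := by
        simp only [smul_eq_mul] at hc
        simp only [sub_mul, Finset.sum_sub_distrib, hc]
        ring
      rw [h2, pow_succ']
      refine Ideal.sum_mem _ fun i _ => Ideal.mul_mem_mul ?_ ?_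
      · rw [← Ideal.Quotient.eq, mo]
      · rw [← hg]; exact Submodule.subset_span ⟨i, rfl⟩
  obtain ⟨N, hN⟩ := IsArtinian.monotone_stabilizes
    (⟨fun k => OrderDual.toDual (J ^ k),
      fun a b hab => OrderDual.toDual_le_toDual.mpr (Ideal.pow_le_pow_right hab)⟩ :
      ℕ →o (Ideal R)ᵒᵈ)
  have hN' : ∀ m, N ≤ m → J ^ N = J ^ m := fun m hm => hN m hm
  have hI : IsIdempotentElem (J ^ (N + 1)) := by
    show J ^ (N + 1) * J ^ (N + 1) = J ^ (N + 1)
    rw [← pow_add, ← hN' (N + 1 + (N + 1)) (by omega), hN' (N + 1) (by omega)]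
  obtain ⟨f, hf, hIf⟩ :=
    (Ideal.isIdempotentElem_iff_of_fg _ (IsNoetherian.noetherian _)).mp hI
  have hfI : f ∈ J ^ (N + 1) := by rw [hIf]; exact Submodule.mem_span_singleton_self f
  have hfJ : f ∈ J := Ideal.pow_le_self (by omega) hfI
  let e' : Λ := algebraMap R Λ (1 - f)
  have he' : e' * e' = e' := by
    show algebraMap R Λ (1 - f) * algebraMap R Λ (1 - f) = algebraMap R Λ (1 - f)
    rw [← map_mul, hf.one_sub.eq]
  have hkill : ∀ s ∈ J ^ (N + 1), ∀ y : Λ, algebraMap R Λ s * y * e' = 0 := by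
    intro s hs y
    rw [hIf, ← Ideal.span, Ideal.mem_span_singleton'] at hs
    obtain ⟨t, rfl⟩ := hs
    rw [Algebra.commutes, mul_assoc, ← map_mul]
    have : t * f * (1 - f) = 0 := by rw [mul_assoc, mul_sub, mul_one, hf.eq, sub_self, mul_zero]
    rw [this, map_zero, mul_zero]
  have heB : ∀ b : B, e' • b = b := by
    intro b
    show algebraMap R Λ (1 - f) • b = b
    rw [map_sub, map_one, sub_smul, one_smul, hJ f hfJ b, sub_zero]
  obtain ⟨mm, lam, hlam⟩ := Module.Finite.exists_fin (R := R) (M := Λ)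
  haveI := hsmallk (N + 1)
  have hsmallT : Small.{v} {x : Λ // x * e' = x} := by
    refine small_of_surjective (f := fun c : Fin mm → R ⧸ J ^ (N + 1) =>
      (⟨(∑ j, (c j).out • lam j) * e', by rw [mul_assoc, he']⟩ : {x : Λ // x * e' = x})) ?_
    rintro ⟨x, hx⟩
    have hxs : x ∈ Submodule.span R (Set.range lam) := by rw [hlam]; trivial
    rw [Submodule.mem_span_range_iff_exists_fun] at hxs
    obtain ⟨r, hr⟩ := hxs
    refine ⟨fun j => Ideal.Quotient.mk _ (r j), Subtype.ext ?_⟩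
    show (∑ j, (Ideal.Quotient.mk _ (r j)).out • lam j) * e' = x
    rw [← hx, ← hr, ← sub_eq_zero, ← sub_mul, ← Finset.sum_sub_distrib, Finset.sum_mul]
    refine Finset.sum_eq_zero fun j _ => ?_
    rw [← sub_smul, Algebra.smul_def]
    apply hkill
    rw [← Ideal.Quotient.eq, mo]
  obtain ⟨n, g, hg⟩ := Module.Finite.exists_fin' Λ B
  let π : (Fin n → Λ) →ₗ[Λ] (Fin n → Λ) :=
    LinearMap.pi (fun i => (LinearMap.toSpanSingleton Λ Λ e') ∘ₗ LinearMap.proj i)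
  have hπ : ∀ c i, π c i = c i * e' := fun c i => rfl
  let Q0 := LinearMap.range π
  have hQ0 : ∀ y : Q0, ∀ i, y.1 i * e' = y.1 i := by
    rintro ⟨y, c, rfl⟩ i
    simp only [hπ, mul_assoc, he']
  haveI : Small.{v} Q0 := by
    haveI := hsmallT
    exact small_of_injective
      (f := fun y : Q0 => fun i => (⟨y.1 i, hQ0 y i⟩ : {x : Λ // x * e' = x}))
      (fun y₁ y₂ h => Subtype.ext (funext fun i => congrArg Subtype.val (congrFun h i)))
  haveI : Module.Projective Λ Q0 := Module.Projective.of_split Q0.subtype π.rangeRestrict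
    (LinearMap.ext fun y => Subtype.ext (funext fun i => hQ0 y i))
  haveI : Module.Finite Λ Q0 := Module.Finite.range π
  refine ⟨Shrink.{v} Q0, inferInstance, inferInstance,
    Module.Finite.equiv (Shrink.linearEquiv Λ Q0).symm, inferInstance,
    g ∘ₗ Q0.subtype ∘ₗ (Shrink.linearEquiv Λ Q0).toLinearMap, ?_⟩
  intro b
  obtain ⟨c, rfl⟩ := hg b
  refine ⟨(Shrink.linearEquiv Λ Q0).symm ⟨π c, c, rfl⟩, ?_⟩
  simp only [LinearMap.coe_comp, Function.comp_apply, LinearEquiv.coe_coe,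
    LinearEquiv.apply_symm_apply, Submodule.coe_subtype]
  have : π c = e' • c := funext fun i => (Algebra.commutes _ _).symm
  rw [this, map_smul, heB]

/-- Every arrow has a left `Epimaps`-approximation. -/
theorem epimaps_hasLeft {R : Type u} [CommRing R] [IsArtinianRing R]
    {Λ : Type u} [Ring Λ] [Algebra R Λ] [Module.Finite R Λ] (a : Arrow (FGModuleCat Λ)) :
    HasLeftApproximation (Epimaps Λ) a := by
  obtain ⟨Q, _, _, _, hproj', p', hp'⟩ := exists_small_projective (R := R) (Λ := Λ) a.right
  let P : FGModuleCat Λ := FGModuleCat.of Λ Q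
  let W : FGModuleCat Λ := FGModuleCat.of Λ (a.left × Q)
  let i₁ : a.left ⟶ W := ConcreteCategory.ofHom (LinearMap.inl Λ a.left Q)
  let i₂ : P ⟶ W := ConcreteCategory.ofHom (LinearMap.inr Λ a.left Q)
  have hW : Nonempty (IsColimit (BinaryCofan.mk i₁ i₂)) := by
    refine ⟨BinaryCofan.isColimitMk
      (fun s => (ConcreteCategory.ofHom ((show a.left →ₗ[Λ] s.pt from s.inl.hom.hom).coprod
        (show Q →ₗ[Λ] s.pt from s.inr.hom.hom)) : W ⟶ s.pt))
      (fun s => ?_) (fun s => ?_) (fun s m h₁ h₂ => by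
        refine FGModuleCat.hom_ext (LinearMap.ext fun ⟨x, y⟩ => ?_)
        have e1 : m.hom.hom (x, 0) = (show a.left →ₗ[Λ] s.pt from s.inl.hom.hom) x :=
          congrArg (fun g => g.hom.hom x) h₁
        have e2 : m.hom.hom (0, y) = (show Q →ₗ[Λ] s.pt from s.inr.hom.hom) y :=
          congrArg (fun g => g.hom.hom y) h₂
        have e3 : m.hom.hom (x, y) = m.hom.hom (x, 0) + m.hom.hom (0, y) := by
          have h := map_add m.hom.hom (x, 0) (0, y)
          rw [Prod.mk_add_mk, add_zero, zero_add] at h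
          exact h
        show m.hom.hom (x, y) = (show a.left →ₗ[Λ] s.pt from s.inl.hom.hom) x +
          (show Q →ₗ[Λ] s.pt from s.inr.hom.hom) y
        rw [e3, e1, e2])⟩
    · ext x
      show LinearMap.coprod _ _ (LinearMap.inl Λ a.left Q x) = _
      simp
    · ext x
      show LinearMap.coprod _ _ (LinearMap.inr Λ a.left Q x) = _
      simp
  let q : W ⟶ a.right := ConcreteCategory.ofHom ((ConcreteCategory.hom a.hom).coprod p')
  have hq₁ : i₁ ≫ q = a.hom := by
    ext x
    show ((ConcreteCategory.hom a.hom).coprod p') (LinearMap.inl Λ a.left Q x) = _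
    simp
    rfl
  have hq₂ : i₂ ≫ q = (show P ⟶ a.right from ConcreteCategory.ofHom p') := by
    ext x
    show ((ConcreteCategory.hom a.hom).coprod p') (LinearMap.inr Λ a.left Q x) = _
    simp
    rfl
  have hproj : Module.Projective Λ P := hproj'
  have hp'' : Function.Surjective
      ⇑(ConcreteCategory.hom (show P ⟶ a.right from ConcreteCategory.ofHom p')) := hp'
  have := epimaps_main (Λ := Λ) a.hom (show P ⟶ a.right from ConcreteCategory.ofHom p')
    hproj hp'' i₁ i₂ hW q hq₁ hq₂
  exact ⟨Arrow.mk q, _, this⟩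

/-- Every arrow has a right `Epimaps`-approximation, given by corestriction to the image. -/
theorem epimaps_hasRight {Λ : Type u} [Ring Λ] (a : Arrow (FGModuleCat Λ)) :
    HasRightApproximation (Epimaps Λ) a := by
  haveI : Module.Finite Λ (LinearMap.range a.hom.hom.hom) :=
    Module.Finite.range _
  let I : FGModuleCat Λ := FGModuleCat.of Λ (LinearMap.range a.hom.hom.hom)
  let e : a.left ⟶ I := ConcreteCategory.ofHom (a.hom.hom.hom.rangeRestrict : a.left →ₗ[Λ] I)
  let ι : I ⟶ a.right :=
    ConcreteCategory.ofHom ((LinearMap.range a.hom.hom.hom).subtype : I →ₗ[Λ] a.right)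
  have sq : (𝟙 a.left : a.left ⟶ a.left) ≫ a.hom = e ≫ ι := FGModuleCat.hom_ext (LinearMap.ext fun x => rfl)
  refine ⟨Arrow.mk e, Arrow.homMk (u := 𝟙 a.left) (v := ι) sq, ?_, ?_⟩
  · exact LinearMap.surjective_rangeRestrict _
  · intro Z' hZ' u
    have mem : ∀ x : Z'.right, u.right.hom.hom x ∈
        LinearMap.range a.hom.hom.hom := by
      intro x
      obtain ⟨y, hy⟩ := hZ' x
      refine ⟨u.left y, ?_⟩
      have := congrArg (fun g => g.hom.hom y) u.w
      rw [← hy]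
      exact this
    let w : Z'.right ⟶ I := ConcreteCategory.ofHom (LinearMap.codRestrict _ u.right.hom.hom mem :
      Z'.right →ₗ[Λ] I)
    have sq' : (u.left : Z'.left ⟶ a.left) ≫ e = Z'.hom ≫ w := by
      refine FGModuleCat.hom_ext (LinearMap.ext fun x => Subtype.ext ?_)
      exact congrArg (fun g => g.hom.hom x) u.w
    refine ⟨Arrow.homMk (u := u.left) (v := w) sq', ?_⟩
    apply Arrow.hom_ext
    · simp
    · refine FGModuleCat.hom_ext (LinearMap.ext fun x => rfl)

/-- Let `Λ` be an artin algebra, `f : M₁ → M₂` in `mod Λ`, and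
`p : P ↠ M₂` an epimorphism with `P` projective.  Let `W = M₁ ⊕ P` (encoded as a
coproduct with injections `i₁, i₂`) and `q = [f p] : W → M₂` the morphism with
components `f` and `p`.  Then `(i₁, 1_{M₂}) : (f : M₁ → M₂) ⟶ (q : M₁ ⊕ P → M₂)` is a
left `epimaps (mod Λ)`-approximation of `f`; consequently `epimaps (mod Λ)` is
covariantly finite, hence functorially finite, in `maps (mod Λ)`. -/
theorem epimaps_leftApproximation
    {R : Type u} [CommRing R] [IsArtinianRing R]
    {Λ : Type u} [Ring Λ] [Algebra R Λ] [Module.Finite R Λ]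
    {M₁ M₂ P W : FGModuleCat Λ} (f : M₁ ⟶ M₂) (p : P ⟶ M₂)
    (hP : Module.Projective Λ P) (hp : Function.Surjective ⇑p)
    (i₁ : M₁ ⟶ W) (i₂ : P ⟶ W) (hW : Nonempty (IsColimit (BinaryCofan.mk i₁ i₂)))
    (q : W ⟶ M₂) (hq₁ : i₁ ≫ q = f) (hq₂ : i₂ ≫ q = p) :
    IsLeftApproximation (Epimaps Λ) (M := Arrow.mk f) (Z := Arrow.mk q)
      (Arrow.homMk (u := i₁) (v := 𝟙 M₂) (by simp [hq₁])) ∧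
    (∀ a : Arrow (FGModuleCat Λ), HasLeftApproximation (Epimaps Λ) a) ∧
    (∀ a : Arrow (FGModuleCat Λ), HasRightApproximation (Epimaps Λ) a) := by
  exact ⟨epimaps_main f p hP hp i₁ i₂ hW q hq₁ hq₂, epimaps_hasLeft (R := R), epimaps_hasRight⟩
end

section
/- Let Λ be an artin algebra. Then the full subcategory mod(Λ)⁰ of mod(mod Λ), consisting of the finitely presented functors F : (mod Λ)^op → Ab with F(P) = 0 for every projective module P in mod Λ, is functorially finite in mod(mod Λ). -/
open CategoryTheory CategoryTheory.Limits Opposite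

set_option maxHeartbeats 1000000
set_option synthInstance.maxHeartbeats 1000000

universe u

/-- The subcategory `mod(Λ)⁰` of `mod (mod Λ)`: finitely presented functors vanishing on
all projective modules. -/
def VanishingOnProjectives (Λ : Type u) [Ring Λ] :
    Set ((FGModuleCat Λ)ᵒᵖ ⥤ AddCommGrpCat.{u}) :=
  {F | IsFinitelyPresentedFunctor F ∧
    ∀ P : FGModuleCat Λ, Module.Projective Λ P → IsZero (F.obj (op P))}

namespace VOPAux

variable {Λ : Type u} [Ring Λ]

noncomputable abbrev ev (X : (FGModuleCat Λ)ᵒᵖ) :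
    ((FGModuleCat Λ)ᵒᵖ ⥤ AddCommGrpCat.{u}) ⥤ AddCommGrpCat.{u} :=
  (evaluation (FGModuleCat Λ)ᵒᵖ AddCommGrpCat.{u}).obj X

lemma yoneda_map_zero {M N : FGModuleCat Λ} :
    preadditiveYoneda.map (0 : M ⟶ N) =
      (0 : preadditiveYoneda.obj M ⟶ preadditiveYoneda.obj N) := by
  ext X g
  simp

lemma exact_of_ptwise {S : ShortComplex ((FGModuleCat Λ)ᵒᵖ ⥤ AddCommGrpCat.{u})}
    (h : ∀ X, (S.map (ev X)).Exact) : S.Exact := by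
  rw [S.exact_iff_isZero_homology]
  apply Functor.isZero
  intro X
  exact IsZero.of_iso (((S.map (ev X)).exact_iff_isZero_homology).1 (h X))
    (S.mapHomologyIso (ev X)).symm

lemma ptwise_of_exact {S : ShortComplex ((FGModuleCat Λ)ᵒᵖ ⥤ AddCommGrpCat.{u})}
    (h : S.Exact) (X : (FGModuleCat Λ)ᵒᵖ) : (S.map (ev X)).Exact :=
  h.map (ev X)

lemma exact_app {S : ShortComplex ((FGModuleCat Λ)ᵒᵖ ⥤ AddCommGrpCat.{u})}
    (h : S.Exact) (X : (FGModuleCat Λ)ᵒᵖ) (x : S.X₂.obj X) (hx : S.g.app X x = 0) :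
    ∃ y, S.f.app X y = x :=
  ((S.map (ev X)).ab_exact_iff).1 (ptwise_of_exact h X) x hx

lemma exact_of_app {S : ShortComplex ((FGModuleCat Λ)ᵒᵖ ⥤ AddCommGrpCat.{u})}
    (h : ∀ (X : (FGModuleCat Λ)ᵒᵖ) (x : S.X₂.obj X), S.g.app X x = 0 → ∃ y, S.f.app X y = x) :
    S.Exact :=
  exact_of_ptwise (fun X => ((S.map (ev X)).ab_exact_iff).2 (h X))

/-- Any map from a representable `(−, P)` to a functor vanishing at `P` is zero. -/
lemma hom_from_yoneda_eq_zero {Z' : (FGModuleCat Λ)ᵒᵖ ⥤ AddCommGrpCat.{u}}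
    {P : FGModuleCat Λ} (hP : IsZero (Z'.obj (op P)))
    (τ : preadditiveYoneda.obj P ⟶ Z') : τ = 0 := by
  have h0 : τ.app (op P) = 0 := hP.eq_of_tgt _ _
  ext X g
  have hnat := congrArg (fun φ => φ (𝟙 P)) (τ.naturality (g : unop X ⟶ P).op)
  dsimp at hnat
  rw [h0] at hnat
  simp at hnat
  exact hnat.trans (map_zero (Z'.map (g : unop X ⟶ P).op).hom)

lemma app_surjective {F G : (FGModuleCat Λ)ᵒᵖ ⥤ AddCommGrpCat.{u}} (p : F ⟶ G) [Epi p]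
    (X : (FGModuleCat Λ)ᵒᵖ) : Function.Surjective (p.app X) :=
  (AddCommGrpCat.epi_iff_surjective _).1 inferInstance

lemma app_injective {F G : (FGModuleCat Λ)ᵒᵖ ⥤ AddCommGrpCat.{u}} (p : F ⟶ G) [Mono p]
    (X : (FGModuleCat Λ)ᵒᵖ) : Function.Injective (p.app X) :=
  (AddCommGrpCat.mono_iff_injective _).1 inferInstance

/-- The underlying linear map of a morphism in `FGModuleCat Λ`. -/
def lmap {M N : FGModuleCat Λ} (f : M ⟶ N) : (M : Type u) →ₗ[Λ] (N : Type u) := f.hom.hom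

/-- A linear map as a morphism in `FGModuleCat Λ`. -/
def toHom {M N : FGModuleCat Λ} (l : (M : Type u) →ₗ[Λ] (N : Type u)) : M ⟶ N :=
  ObjectProperty.homMk (ModuleCat.ofHom l)

/-- In a surjective situation, any element of `Z'.obj (op (of Λ Λ))` being zero forces the
presentation map to be surjective. -/
lemma presentation_surjective
    {Z' : (FGModuleCat Λ)ᵒᵖ ⥤ AddCommGrpCat.{u}} {N₁ N₀ : FGModuleCat Λ}
    (g : N₁ ⟶ N₀) (p' : preadditiveYoneda.obj N₀ ⟶ Z')
    (w' : preadditiveYoneda.map g ≫ p' = 0)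
    (hex' : (ShortComplex.mk (preadditiveYoneda.map g) p' w').Exact)
    (hvan : IsZero (Z'.obj (op (FGModuleCat.of Λ Λ)))) :
    Function.Surjective (lmap g) := by
  intro m
  set L : FGModuleCat Λ := FGModuleCat.of Λ Λ
  let hm : L ⟶ N₀ := toHom (LinearMap.toSpanSingleton Λ _ m)
  have h0 : p'.app (op L) hm = 0 := by
    have := hvan.eq_of_tgt (𝟙 _) 0
    calc p'.app (op L) hm = (𝟙 (Z'.obj (op L)) : _ ⟶ _) (p'.app (op L) hm) := rfl
      _ = (0 : Z'.obj (op L) ⟶ Z'.obj (op L)) (p'.app (op L) hm) := by rw [this]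
      _ = 0 := rfl
  obtain ⟨k, hk⟩ := exact_app hex' (op L) hm h0
  let one : (L : Type u) := (1 : Λ)
  refine ⟨lmap k one, ?_⟩
  have h1 : (k : L ⟶ N₁) ≫ g = hm := hk
  have h2 := congrArg (fun l => lmap l one) h1
  calc (lmap g) ((lmap k) one) = lmap (k ≫ g) one := rfl
    _ = lmap hm one := by rw [h1]
    _ = (1 : Λ) • m := rfl
    _ = m := one_smul Λ m

/-- Right approximation: the kernel of the canonical map `F ⟶ (−, coker f)`. -/
lemma right_approx (F : (FGModuleCat Λ)ᵒᵖ ⥤ AddCommGrpCat.{u})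
    (hF : IsFinitelyPresentedFunctor F) :
    HasRightApproximation (VanishingOnProjectives Λ) F := by
  obtain ⟨M₁, M₀, f, p, w, hp, hex⟩ := hF
  haveI := hp
  let fl := lmap f
  let Dsub := LinearMap.range fl
  let D : FGModuleCat Λ := FGModuleCat.of Λ Dsub
  let j : D ⟶ M₀ := toHom Dsub.subtype
  let Cq : FGModuleCat Λ := FGModuleCat.of Λ ((M₀ : Type u) ⧸ Dsub)
  let c : M₀ ⟶ Cq := toHom Dsub.mkQ
  have hfc : f ≫ c = 0 := FGModuleCat.hom_ext <| LinearMap.ext fun x =>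
    (Submodule.Quotient.mk_eq_zero _).2 ⟨x, rfl⟩
  have hjc : j ≫ c = 0 := FGModuleCat.hom_ext <| LinearMap.ext fun d =>
    (Submodule.Quotient.mk_eq_zero _).2 d.2
  have hfc' : preadditiveYoneda.map f ≫ preadditiveYoneda.map c = 0 := by
    rw [← preadditiveYoneda.map_comp, hfc, yoneda_map_zero]
  haveI : Epi (ShortComplex.mk (preadditiveYoneda.map f) p w).g := hp
  let hco := hex.gIsCokernel
  let φ : F ⟶ preadditiveYoneda.obj Cq :=
    hco.desc (CokernelCofork.ofπ (preadditiveYoneda.map c) hfc')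
  have hpφ : p ≫ φ = preadditiveYoneda.map c := Cofork.IsColimit.π_desc hco
  have happ : ∀ (X : (FGModuleCat Λ)ᵒᵖ) (h : (preadditiveYoneda.obj M₀).obj X),
      φ.app X (p.app X h) = (h : unop X ⟶ M₀) ≫ c := by
    intro X h
    have := congrArg (fun τ => τ.app X h) hpφ
    exact this
  let K := kernel φ
  let ι : K ⟶ F := kernel.ι φ
  have hιφ : ∀ (X : (FGModuleCat Λ)ᵒᵖ) (z : K.obj X), φ.app X (ι.app X z) = 0 := by
    intro X z
    calc φ.app X (ι.app X z) = (ι ≫ φ).app X z := rfl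
      _ = (0 : K ⟶ preadditiveYoneda.obj Cq).app X z := by rw [kernel.condition]
      _ = 0 := rfl
  -- kernel of `φ.app X` consists of images of maps landing in `range f`
  have hker : ∀ (X : (FGModuleCat Λ)ᵒᵖ) (x : F.obj X), φ.app X x = 0 →
      ∃ h : unop X ⟶ M₀, p.app X h = x ∧ ∀ a : X.unop, lmap h a ∈ Dsub := by
    intro X x hx
    obtain ⟨h, hh⟩ := app_surjective p X x
    have hhc : (h : unop X ⟶ M₀) ≫ c = 0 := by
      rw [← happ X h, hh, hx]; rfl
    refine ⟨h, hh, fun a => ?_⟩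
    have h3 : (Submodule.Quotient.mk (lmap h a) : (M₀ : Type u) ⧸ Dsub) = 0 :=
      congrArg (fun l => lmap l a) hhc
    exact (Submodule.Quotient.mk_eq_zero _).1 h3
  -- `φ` is injective at projectives
  have hker0 : ∀ (Q : FGModuleCat Λ), Module.Projective Λ Q →
      ∀ x : F.obj (op Q), φ.app (op Q) x = 0 → x = 0 := by
    intro Q hQ x hx
    obtain ⟨h, hh, hmem⟩ := hker (op Q) x hx
    obtain ⟨k, hk⟩ := Module.projective_lifting_property fl.rangeRestrict
      ((lmap h).codRestrict Dsub hmem) fl.surjective_rangeRestrict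
    have hfk : (toHom k : Q ⟶ M₁) ≫ f = h := by
      apply FGModuleCat.hom_ext
      apply LinearMap.ext
      intro a
      exact congrArg Subtype.val (congrArg (fun l => l a) hk)
    have : x = (preadditiveYoneda.map f ≫ p).app (op Q) (toHom k) := by
      rw [← hh, ← hfk]; rfl
    rw [this, w]
    rfl
  have hvanK : ∀ P : FGModuleCat Λ, Module.Projective Λ P → IsZero (K.obj (op P)) := by
    intro Q hQ
    haveI : Subsingleton (K.obj (op Q)) := by
      refine ⟨fun a b => ?_⟩
      have ha : ι.app (op Q) a = 0 := hker0 Q hQ _ (hιφ _ a)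
      have hb : ι.app (op Q) b = 0 := hker0 Q hQ _ (hιφ _ b)
      exact app_injective ι (op Q) (ha.trans hb.symm)
    exact AddCommGrpCat.isZero_of_subsingleton _
  -- finite presentation of K
  let ft : M₁ ⟶ D := toHom fl.rangeRestrict
  have hftj : ft ≫ j = f := FGModuleCat.hom_ext <| LinearMap.ext fun a => rfl
  let ρ : preadditiveYoneda.obj D ⟶ F := preadditiveYoneda.map j ≫ p
  have hρφ : ρ ≫ φ = 0 := by
    rw [Category.assoc, hpφ, ← preadditiveYoneda.map_comp, hjc, yoneda_map_zero]
  let ρ' : preadditiveYoneda.obj D ⟶ K := kernel.lift φ ρ hρφ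
  have hρ'ι : ρ' ≫ ι = ρ := kernel.lift_ι φ ρ hρφ
  have hρ'app : ∀ (X : (FGModuleCat Λ)ᵒᵖ) (d : (preadditiveYoneda.obj D).obj X),
      ι.app X (ρ'.app X d) = p.app X ((d : unop X ⟶ D) ≫ j) := by
    intro X d
    have := congrArg (fun τ => τ.app X d) hρ'ι
    exact this
  have wK : preadditiveYoneda.map ft ≫ ρ' = 0 := by
    rw [← cancel_mono ι, Category.assoc, hρ'ι, zero_comp]
    show preadditiveYoneda.map ft ≫ preadditiveYoneda.map j ≫ p = 0
    rw [← Category.assoc, ← preadditiveYoneda.map_comp, hftj, w]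
  haveI : ∀ X, Epi (ρ'.app X) := by
    intro X
    rw [AddCommGrpCat.epi_iff_surjective]
    intro x
    obtain ⟨h, hh, hmem⟩ := hker X (ι.app X x) (hιφ X x)
    let ht : unop X ⟶ D := toHom ((lmap h).codRestrict Dsub hmem)
    have hhj : (ht : unop X ⟶ D) ≫ j = h := FGModuleCat.hom_ext <| LinearMap.ext fun a => rfl
    refine ⟨ht, app_injective ι X ?_⟩
    rw [hρ'app X ht, hhj, hh]
  haveI hρ'epi : Epi ρ' := NatTrans.epi_of_epi_app ρ' 
  have hexK : (ShortComplex.mk (preadditiveYoneda.map ft) ρ' wK).Exact := by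
    apply exact_of_app
    intro X d hd
    have h0 : p.app X ((d : unop X ⟶ D) ≫ j) = 0 := by
      rw [← hρ'app X d]
      have : ρ'.app X d = 0 := hd
      rw [this, map_zero]
    obtain ⟨k, hk⟩ := exact_app hex X ((d : unop X ⟶ D) ≫ j) h0
    refine ⟨k, ?_⟩
    have hk' : (k : unop X ⟶ M₁) ≫ f = (d : unop X ⟶ D) ≫ j := hk
    show (k : unop X ⟶ M₁) ≫ ft = d
    apply FGModuleCat.hom_ext
    apply LinearMap.ext
    intro a
    apply Subtype.ext
    exact congrArg (fun l => lmap l a) hk'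
  -- the approximation property
  refine ⟨K, ι, ⟨⟨M₁, D, ft, ρ', wK, hρ'epi, hexK⟩, hvanK⟩, ?_⟩
  intro Z' hZ' u
  obtain ⟨⟨N₁, N₀, g, p', w', hp', hex'⟩, hZv⟩ := hZ'
  haveI := hp'
  have hvanΛ : IsZero (Z'.obj (op (FGModuleCat.of Λ Λ))) :=
    hZv _ (inferInstanceAs (Module.Projective Λ Λ))
  have hg := presentation_surjective g p' w' hex' hvanΛ
  let ψ : Z' ⟶ preadditiveYoneda.obj Cq := u ≫ φ
  let h : N₀ ⟶ Cq := preadditiveYoneda.preimage (p' ≫ ψ)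
  have hh : preadditiveYoneda.map h = p' ≫ ψ := Functor.map_preimage _ _
  have hgh : preadditiveYoneda.map g ≫ preadditiveYoneda.map h = 0 := by
    rw [hh, ← Category.assoc, w', zero_comp]
  have hh0 : h = 0 := by
    apply FGModuleCat.hom_ext
    apply LinearMap.ext
    intro x
    obtain ⟨y, hy⟩ := hg x
    let L : FGModuleCat Λ := FGModuleCat.of Λ Λ
    let one : (L : Type u) := (1 : Λ)
    let t : L ⟶ N₁ := toHom (LinearMap.toSpanSingleton Λ _ y)
    have ht : lmap t one = y := one_smul Λ y
    have h2 := congrArg (fun τ => lmap (τ.app (op L) t) one) hgh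
    calc lmap h x = lmap h (lmap g y) := by rw [hy]
      _ = lmap h (lmap g (lmap t one)) := by rw [ht]
      _ = lmap ((t ≫ g) ≫ h) one := rfl
      _ = 0 := h2.trans rfl
  have hψ0 : u ≫ φ = 0 := by
    have hp'ψ : p' ≫ ψ = 0 := by
      rw [← hh, hh0, yoneda_map_zero]
    exact zero_of_epi_comp p' hp'ψ
  exact ⟨kernel.lift φ u hψ0, kernel.lift_ι φ u hψ0⟩

/-- Left approximation: the cokernel of `(−,P) ⟶ F` for `P ↠ M₀` projective. -/
lemma left_approx (F : (FGModuleCat Λ)ᵒᵖ ⥤ AddCommGrpCat.{u})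
    (hF : IsFinitelyPresentedFunctor F) :
    HasLeftApproximation (VanishingOnProjectives Λ) F := by
  obtain ⟨M₁, M₀, f, p, w, hp, hex⟩ := hF
  haveI := hp
  obtain ⟨n, π₀, hπ₀⟩ := Module.Finite.exists_fin' Λ (M₀ : Type u)
  let P : FGModuleCat Λ := FGModuleCat.of Λ (Fin n → Λ)
  let π : P ⟶ M₀ := toHom π₀
  let α : preadditiveYoneda.obj P ⟶ F := preadditiveYoneda.map π ≫ p
  let F' := cokernel α
  let π' : F ⟶ F' := cokernel.π α
  have hα : ∀ (X : (FGModuleCat Λ)ᵒᵖ) (z : (preadditiveYoneda.obj P).obj X),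
      α.app X z = p.app X ((z : X.unop ⟶ P) ≫ π) := fun X z => rfl
  have hαπ' : ∀ (X : (FGModuleCat Λ)ᵒᵖ) (z : (preadditiveYoneda.obj P).obj X),
      π'.app X (α.app X z) = 0 := by
    intro X z
    calc π'.app X (α.app X z) = (α ≫ π').app X z := rfl
      _ = (0 : preadditiveYoneda.obj P ⟶ F').app X z := by rw [cokernel.condition]
      _ = 0 := rfl
  let N : FGModuleCat Λ := FGModuleCat.of Λ (FGModuleCat.carrier M₁ × (Fin n → Λ))
  let f' : N ⟶ M₀ := toHom (LinearMap.coprod (lmap f) π₀)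
  let p'' : preadditiveYoneda.obj M₀ ⟶ F' := p ≫ π'
  have happ : ∀ (X : (FGModuleCat Λ)ᵒᵖ) (h : (preadditiveYoneda.obj M₀).obj X),
      p''.app X h = π'.app X (p.app X h) := fun X h => rfl
  have hwf : ∀ (X : (FGModuleCat Λ)ᵒᵖ) (k : X.unop ⟶ M₁), p.app X (k ≫ f) = 0 := by
    intro X k
    calc p.app X (k ≫ f) = (preadditiveYoneda.map f ≫ p).app X k := rfl
      _ = (0 : preadditiveYoneda.obj M₁ ⟶ F).app X k := by rw [w]
      _ = 0 := rfl
  have wL : preadditiveYoneda.map f' ≫ p'' = 0 := by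
    ext X k
    let k₁ : X.unop ⟶ M₁ := toHom ((LinearMap.fst Λ _ _).comp (lmap k))
    let k₂ : X.unop ⟶ P := toHom ((LinearMap.snd Λ _ _).comp (lmap k))
    have hsplit : (k : X.unop ⟶ N) ≫ f' = k₁ ≫ f + k₂ ≫ π := FGModuleCat.hom_ext <| LinearMap.ext fun a => rfl
    show p''.app X ((k : X.unop ⟶ N) ≫ f') = _
    refine (congrArg (fun x => π'.app X (p.app X x)) hsplit).trans ?_
    refine (congrArg (π'.app X) ((map_add (ConcreteCategory.hom (p.app X)) (k₁ ≫ f) (k₂ ≫ π)).trans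
      (congrArg₂ (· + ·) (hwf X k₁) (hα X k₂).symm))).trans ?_
    rw [zero_add]
    exact (hαπ' X k₂).trans rfl
  haveI hπ'epi : Epi π' := inferInstanceAs (Epi (cokernel.π α))
  haveI hepi'' : Epi p'' := epi_comp p π'
  have hexL : (ShortComplex.mk (preadditiveYoneda.map f') p'' wL).Exact := by
    apply exact_of_app
    intro X h hph
    have h0 : π'.app X (p.app X h) = 0 := hph
    obtain ⟨z, hz⟩ := exact_app (ShortComplex.exact_cokernel α) X (p.app X h) h0
    let h' : X.unop ⟶ M₀ := h
    let z' : X.unop ⟶ P := z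
    have hz2 : α.app X z' = p.app X h' := hz
    have hz' : p.app X (z' ≫ π) = p.app X h' := (hα X z').symm.trans hz2
    have hsub : p.app X (h' - z' ≫ π) = 0 :=
      (map_sub (ConcreteCategory.hom (p.app X)) h' (z' ≫ π)).trans (sub_eq_zero.2 hz'.symm)
    obtain ⟨k, hk⟩ := exact_app hex X (h' - z' ≫ π) hsub
    have hk' : (k : X.unop ⟶ M₁) ≫ f = h' - z' ≫ π := hk
    let m : X.unop ⟶ N := toHom (LinearMap.prod (lmap k) (lmap z'))
    refine ⟨m, ?_⟩
    show m ≫ f' = h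
    have hm : m ≫ f' = (k : X.unop ⟶ M₁) ≫ f + z' ≫ π := FGModuleCat.hom_ext <| LinearMap.ext fun a => rfl
    rw [hm, hk', sub_add_cancel]
  have hvanL : ∀ Q : FGModuleCat Λ, Module.Projective Λ Q → IsZero (F'.obj (op Q)) := by
    intro Q hQ
    have hall : ∀ y : F'.obj (op Q), y = 0 := by
      intro y
      obtain ⟨x, hx⟩ := app_surjective π' (op Q) y
      obtain ⟨h, hh⟩ := app_surjective p (op Q) x
      obtain ⟨k, hk⟩ := Module.projective_lifting_property π₀ (lmap h) hπ₀
      have hkπ : (toHom k : Q ⟶ P) ≫ π = h := FGModuleCat.hom_ext hk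
      rw [← hx, ← hh, ← hkπ]
      exact (congrArg (π'.app (op Q)) (hα (op Q) (toHom k)).symm).trans (hαπ' (op Q) (toHom k))
    haveI : Subsingleton (F'.obj (op Q)) := ⟨fun a b => by rw [hall a, hall b]⟩
    exact AddCommGrpCat.isZero_of_subsingleton _
  refine ⟨F', π', ⟨⟨N, M₀, f', p'', wL, hepi'', hexL⟩, hvanL⟩, ?_⟩
  intro Z' hZ' u
  have hzero : IsZero (Z'.obj (op P)) :=
    hZ'.2 P (inferInstanceAs (Module.Projective Λ (Fin n → Λ)))
  have hαu : α ≫ u = 0 := hom_from_yoneda_eq_zero hzero (α ≫ u)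
  exact ⟨cokernel.desc α u hαu, cokernel.π_desc α u hαu⟩

end VOPAux

/-- Let `Λ` be an artin algebra.  The full subcategory `mod(Λ)⁰` of
`mod (mod Λ)` consisting of the finitely presented functors vanishing on projectives is
functorially finite in `mod (mod Λ)`. -/
theorem vanishingOnProjectives_functoriallyFinite
    {R : Type u} [CommRing R] [IsArtinianRing R]
    {Λ : Type u} [Ring Λ] [Algebra R Λ] [Module.Finite R Λ] :
    ∀ F : (FGModuleCat Λ)ᵒᵖ ⥤ AddCommGrpCat.{u}, IsFinitelyPresentedFunctor F →
      HasRightApproximation (VanishingOnProjectives Λ) F ∧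
      HasLeftApproximation (VanishingOnProjectives Λ) F := by
  intro F hF
  exact ⟨VOPAux.right_approx F hF, VOPAux.left_approx F hF⟩
end
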